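/- arXiv:1702.03194 — 8 statements merged into one kernel-verified Lean document; each statement's English description precedes it below -/
import Mathlib

section
/- Let r = [r_0, ..., r_m] and c = [c_0, ..., c_m] be strictly increasing finite sequences of natural numbers indexing rows and columns of the Pascal upper triangular matrix. Then the (m+1)×(m+1) square matrix T_{r,c} with (i,j) entry equal to the binomial coefficient C(c_j, r_i) is invertible if and only if r_i ≤ c_i for all i = 0, ..., m. -/
open Finset Matrix

private lemma sum_range_choose_lower (n k : ℕ) :
    ∑ t ∈ Finset.range n, t.choose k = n.choose (k + 1) := by
  induction n with
  | zero => simp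
  | succ n ih =>
    rw [Finset.sum_range_succ, ih, Nat.choose_succ_succ']
    omega

private lemma hockey (a b k : ℕ) (hab : a ≤ b) :
    ((b.choose (k + 1) : ℚ)) - (a.choose (k + 1) : ℚ)
      = ∑ t ∈ Finset.Ico a b, (t.choose k : ℚ) := by
  have h := Finset.sum_range_add_sum_Ico (fun t => (t.choose k : ℚ)) hab
  have h1 : ∑ t ∈ Finset.range a, (t.choose k : ℚ) = (a.choose (k+1) : ℚ) := by
    exact_mod_cast congrArg (Nat.cast : ℕ → ℚ) (sum_range_choose_lower a k)
  have h2 : ∑ t ∈ Finset.range b, (t.choose k : ℚ) = (b.choose (k+1) : ℚ) := by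
    exact_mod_cast congrArg (Nat.cast : ℕ → ℚ) (sum_range_choose_lower b k)
  rw [h1, h2] at h
  linarith

/-- If some `c i₀ < r i₀`, the binomial matrix has a zero block and determinant `0`. -/
private lemma pascal_det_eq_zero {n : ℕ} (r c : Fin n → ℕ) (hr : Monotone r)
    (hc : Monotone c) (i₀ : Fin n) (h : c i₀ < r i₀) :
    (Matrix.of fun i j => ((c j).choose (r i) : ℚ)).det = 0 := by
  rw [Matrix.det_apply]
  refine Finset.sum_eq_zero fun σ _ => ?_
  obtain ⟨i, hi, hσ⟩ : ∃ i, i ≤ i₀ ∧ i₀ ≤ σ i := by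
    by_contra hcon
    push_neg at hcon
    have hmap : ∀ i ∈ Finset.Iic i₀, σ i ∈ Finset.Iio i₀ := fun i hi => by
      simp only [Finset.mem_Iic] at hi
      simpa using hcon i hi
    have hcard := Finset.card_le_card_of_injOn σ hmap (σ.injective.injOn)
    rw [Fin.card_Iic, Fin.card_Iio] at hcard
    omega
  refine smul_eq_zero_of_right _ (Finset.prod_eq_zero (Finset.mem_univ i) ?_)
  have hlt : c i < r (σ i) := lt_of_le_of_lt (hc hi) (lt_of_lt_of_le h (hr hσ))
  simp [Matrix.of_apply, Nat.choose_eq_zero_of_lt hlt]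

private lemma pascal_det_pos : ∀ (m : ℕ) (r c : Fin (m + 1) → ℕ),
    StrictMono r → StrictMono c → (∀ i, r i ≤ c i) →
    0 < (Matrix.of fun i j => ((c j).choose (r i) : ℚ)).det := by
  intro m
  induction m with
  | zero =>
    intro r c _ _ h
    rw [Matrix.det_fin_one, Matrix.of_apply]
    have := Nat.choose_pos (h 0)
    exact_mod_cast this
  | succ n IH =>
    suffices H : ∀ (k : ℕ) (r c : Fin (n + 2) → ℕ), r 0 ≤ k → StrictMono r → StrictMono c →
        (∀ i, r i ≤ c i) →
        0 < (Matrix.of fun i j => ((c j).choose (r i) : ℚ)).det from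
      fun r c hr hc h => H (r 0) r c le_rfl hr hc h
    intro k
    induction k with
    | zero =>
      intro r c hr0 hr hc h
      have hr00 : r 0 = 0 := Nat.le_zero.mp hr0
      have hrpos : ∀ i : Fin (n + 1), 1 ≤ r i.succ := fun i => by
        have := hr (Fin.succ_pos i)
        omega
      rcases Nat.eq_zero_or_pos (c 0) with hc0 | hc0
      · -- case r 0 = 0, c 0 = 0 : expand along the first column
        rw [Matrix.det_succ_column_zero]
        rw [Finset.sum_eq_single 0]
        · have h00 : (Matrix.of fun i j : Fin (n+2) => ((c j).choose (r i) : ℚ)) 0 0 = 1 := by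
            simp [hc0, hr00]
          rw [h00, Fin.succAbove_zero]
          simp only [Fin.val_zero, pow_zero, one_mul, mul_one]
          have hsub : ((Matrix.of fun i j : Fin (n+2) => ((c j).choose (r i) : ℚ)).submatrix
              Fin.succ Fin.succ)
              = Matrix.of (fun i j : Fin (n+1) => ((c j.succ).choose (r i.succ) : ℚ)) := rfl
          rw [hsub]
          exact IH _ _ (fun a b hab => hr (Fin.succ_lt_succ_iff.mpr hab))
            (fun a b hab => hc (Fin.succ_lt_succ_iff.mpr hab)) (fun i => h i.succ)
        · intro i _ hi
          have hipos : (0 : Fin (n+2)) < i := Fin.pos_iff_ne_zero.mpr hi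
          have : c 0 < r i := by
            have := hr hipos
            omega
          have hz : (Matrix.of fun i j : Fin (n+2) => ((c j).choose (r i) : ℚ)) i 0 = 0 := by
            simp [Nat.choose_eq_zero_of_lt this]
          rw [hz]
          ring
        · simp
      · -- case r 0 = 0 < c 0 : difference the columns
        set B : Matrix (Fin (n+2)) (Fin (n+2)) ℚ := Matrix.of fun i j =>
          (Fin.cases ((c 0).choose (r i) : ℚ)
            (fun j' : Fin (n+1) =>
              ((c j'.succ).choose (r i) : ℚ) - ((c j'.castSucc).choose (r i) : ℚ)) j) with hB
        have hdet1 : (Matrix.of fun i j : Fin (n+2) => ((c j).choose (r i) : ℚ)).det = B.det := by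
          refine Matrix.det_eq_of_forall_col_eq_smul_add_pred (fun _ => (1 : ℚ)) ?_ ?_
          · intro i; simp [hB]
          · intro i j
            simp only [hB, Matrix.of_apply, Fin.cases_succ]
            ring
        rw [hdet1, Matrix.det_succ_row_zero, Finset.sum_eq_single 0]
        · have hB00 : B 0 0 = 1 := by simp [hB, hr00]
          rw [hB00, Fin.succAbove_zero]
          simp only [Fin.val_zero, pow_zero, one_mul, mul_one]
          -- the minor D
          set D : Matrix (Fin (n+1)) (Fin (n+1)) ℚ := B.submatrix Fin.succ Fin.succ with hD
          have hDentry : ∀ i j : Fin (n+1), D i j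
              = ((c j.succ).choose (r i.succ) : ℚ) - ((c j.castSucc).choose (r i.succ) : ℚ) := by
            intro i j
            simp [hD, hB, Matrix.submatrix_apply, Fin.cases_succ]
          rw [← Matrix.det_transpose D]
          have hrow : Dᵀ = fun j => ∑ t ∈ Finset.Ico (c j.castSucc) (c j.succ),
              (fun i : Fin (n+1) => ((t.choose (r i.succ - 1)) : ℚ)) := by
            funext j i
            rw [Matrix.transpose_apply, hDentry i j, Finset.sum_apply]
            have h1 : r i.succ - 1 + 1 = r i.succ := Nat.succ_pred_eq_of_pos (hrpos i)
            have := hockey (c j.castSucc) (c j.succ) (r i.succ - 1)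
              (le_of_lt (hc (Fin.castSucc_lt_succ : j.castSucc < j.succ)))
            rw [h1] at this
            exact this
          have hdet2 : Dᵀ.det = Matrix.detRowAlternating Dᵀ := rfl
          rw [hdet2, hrow]
          have expand : (Matrix.detRowAlternating : (Fin (n+1) → ℚ) [⋀^Fin (n+1)]→ₗ[ℚ] ℚ)
              (fun j => ∑ t ∈ Finset.Ico (c j.castSucc) (c j.succ),
                (fun i : Fin (n+1) => ((t.choose (r i.succ - 1)) : ℚ)))
              = ∑ p ∈ Fintype.piFinset (fun j : Fin (n+1) =>
                    Finset.Ico (c j.castSucc) (c j.succ)),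
                  Matrix.detRowAlternating
                    (fun j => fun i : Fin (n+1) => (((p j).choose (r i.succ - 1)) : ℚ)) :=
            (Matrix.detRowAlternating :
              (Fin (n+1) → ℚ) [⋀^Fin (n+1)]→ₗ[ℚ] ℚ).toMultilinearMap.map_sum_finset
              (fun j t => (fun i : Fin (n+1) => ((t.choose (r i.succ - 1)) : ℚ)))
              (fun j => Finset.Ico (c j.castSucc) (c j.succ))
          rw [expand]
          -- each term is a binomial determinant again
          have hterm : ∀ p : Fin (n+1) → ℕ,
              (Matrix.detRowAlternating
                (fun j => fun i : Fin (n+1) => (((p j).choose (r i.succ - 1)) : ℚ)))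
              = (Matrix.of fun i j : Fin (n+1) => (((p j).choose (r i.succ - 1)) : ℚ)).det := by
            intro p
            rw [← Matrix.det_transpose (Matrix.of fun i j : Fin (n+1) =>
              (((p j).choose (r i.succ - 1)) : ℚ))]
            rfl
          have hk : StrictMono (fun i : Fin (n+1) => r i.succ - 1) := by
            intro a b hab
            have h2 := hr (Fin.succ_lt_succ_iff.mpr hab)
            have := hrpos a
            show r a.succ - 1 < r b.succ - 1
            omega
          apply Finset.sum_pos'
          · intro p hp
            rw [hterm p]
            have hpmem : ∀ j, p j ∈ Finset.Ico (c j.castSucc) (c j.succ) :=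
              Fintype.mem_piFinset.mp hp
            have hpm : StrictMono p := by
              intro a b hab
              have ha := (Finset.mem_Ico.mp (hpmem a)).2
              have hb := (Finset.mem_Ico.mp (hpmem b)).1
              have hcc : c a.succ ≤ c b.castSucc := by
                apply hc.monotone
                rw [Fin.le_def]
                simp only [Fin.val_succ, Fin.coe_castSucc]
                exact hab
              omega
            by_cases hall : ∀ i : Fin (n+1), r i.succ - 1 ≤ p i
            · exact le_of_lt (IH _ _ hk hpm hall)
            · push_neg at hall
              obtain ⟨i₀, hi₀⟩ := hall
              rw [pascal_det_eq_zero _ _ hk.monotone hpm.monotone i₀ hi₀]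
          · refine ⟨fun j => c j.succ - 1, ?_, ?_⟩
            · rw [Fintype.mem_piFinset]
              intro j
              rw [Finset.mem_Ico]
              have := hc (Fin.castSucc_lt_succ : j.castSucc < j.succ)
              omega
            · rw [hterm]
              apply IH _ _ hk
              · intro a b hab
                have h2 := hc (Fin.succ_lt_succ_iff.mpr hab)
                have h3 : 0 < c a.succ := lt_of_le_of_lt (Nat.zero_le _) (hc (Fin.succ_pos a))
                show c a.succ - 1 < c b.succ - 1
                omega
              · intro i
                have := h i.succ
                have := hrpos i
                omega
        · intro j _ hj
          obtain ⟨j', rfl⟩ := Fin.eq_succ_of_ne_zero hj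
          have hz : B 0 j'.succ = 0 := by
            simp [hB, hr00]
          rw [hz]
          ring
        · simp
    | succ k IHk =>
      intro r c hr0 hr hc h
      rcases Nat.lt_or_ge (r 0) (k + 1) with hlt | hge
      · exact IHk r c (Nat.lt_succ_iff.mp hlt) hr hc h
      · -- r 0 = k + 1 ≥ 1 : scale rows and columns
        have hr1 : ∀ i, 1 ≤ r i := fun i => le_trans (by omega) (hr.monotone (Fin.zero_le i))
        have hc1 : ∀ j, 1 ≤ c j := fun j => le_trans (le_trans (hr1 0) (h 0))
          (hc.monotone (Fin.zero_le j))
        set r' : Fin (n+2) → ℕ := fun i => r i - 1 with hr'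
        set c' : Fin (n+2) → ℕ := fun j => c j - 1 with hc'
        have hkey : (Matrix.of fun i j : Fin (n+2) => ((c j).choose (r i) : ℚ))
            = Matrix.of (fun i j : Fin (n+2) =>
              (c j : ℚ) * ((Matrix.of fun i j : Fin (n+2) =>
                ((r i : ℚ))⁻¹ * ((c' j).choose (r' i) : ℚ)) i j)) := by
          ext i j
          have hnat : c j * (c' j).choose (r' i) = (c j).choose (r i) * r i := by
            obtain ⟨a, ha⟩ : ∃ a, c j = a + 1 := ⟨c j - 1, by have := hc1 j; omega⟩
            obtain ⟨b, hb⟩ : ∃ b, r i = b + 1 := ⟨r i - 1, by have := hr1 i; omega⟩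
            have hc'j : c' j = a := by simp [hc', ha]
            have hr'i : r' i = b := by simp [hr', hb]
            rw [ha, hb, hc'j, hr'i]
            simpa [Nat.succ_eq_add_one] using Nat.add_one_mul_choose_eq a b
          have hri : ((r i : ℚ)) ≠ 0 := by
            have := hr1 i
            positivity
          simp only [Matrix.of_apply]
          field_simp
          exact_mod_cast hnat.symm
        rw [hkey, Matrix.det_mul_row]
        rw [show (Matrix.of fun i j : Fin (n+2) => ((r i : ℚ))⁻¹ * ((c' j).choose (r' i) : ℚ)).det = _
          from Matrix.det_mul_column _ _]
        have hrm : StrictMono r' := by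
          intro a b hab
          have := hr hab
          have := hr1 a
          simp only [hr']
          omega
        have hcm : StrictMono c' := by
          intro a b hab
          have := hc hab
          have := hc1 a
          simp only [hc']
          omega
        have hrc : ∀ i, r' i ≤ c' i := fun i => by
          have := h i
          simp only [hr', hc']
          omega
        have hdpos := IHk r' c' (by simp only [hr']; omega) hrm hcm hrc
        have hprodc : 0 < ∏ j : Fin (n+2), (c j : ℚ) := by
          apply Finset.prod_pos
          intro j _
          exact_mod_cast hc1 j
        have hprodr : 0 < ∏ i : Fin (n+2), ((r i : ℚ))⁻¹ := by
          apply Finset.prod_pos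
          intro i _
          have : (0 : ℚ) < (r i : ℚ) := by exact_mod_cast hr1 i
          positivity
        positivity

/-- The square submatrix of the Pascal upper-triangular matrix with rows
`r 0, …, r m` and columns `c 0, …, c m`: its `(i,j)` entry is the binomial
coefficient `C(c j, r i)` (which is `0` when `r i > c j`).  It is invertible
iff `r i ≤ c i` for all `i = 0, …, m`. -/
theorem pascal_square_submatrix_invertible_iff
    (m : ℕ) (r c : ℕ → ℕ) (hr : StrictMono r) (hc : StrictMono c) :
    IsUnit (Matrix.of fun i j : Fin (m + 1) =>
        ((c (j : ℕ)).choose (r (i : ℕ)) : ℚ)) ↔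
      ∀ i ≤ m, r i ≤ c i := by
  rw [Matrix.isUnit_iff_isUnit_det, isUnit_iff_ne_zero]
  constructor
  · intro hdet i him
    by_contra hlt
    push_neg at hlt
    exact hdet (pascal_det_eq_zero (fun i : Fin (m+1) => r (i : ℕ))
      (fun j : Fin (m+1) => c (j : ℕ))
      (fun a b hab => hr.monotone (Fin.le_def.mp hab))
      (fun a b hab => hc.monotone (Fin.le_def.mp hab))
      ⟨i, by omega⟩ hlt)
  · intro h
    exact ne_of_gt (pascal_det_pos m (fun i : Fin (m+1) => r (i : ℕ))
      (fun j : Fin (m+1) => c (j : ℕ))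
      (fun a b hab => hr (Fin.lt_def.mp hab))
      (fun a b hab => hc (Fin.lt_def.mp hab))
      (fun i => h i (Fin.is_le i)))
end

section
/- Let r = [r_0, ..., r_m] and c = [c_0, ..., c_m] be strictly increasing finite sequences of natural numbers. Then the square matrix T_{r,c} with (i,j) entry C(c_j, r_i) is invertible if and only if no diagonal entry is zero, i.e., if and only if C(c_i, r_i) ≠ 0 for all i = 0, ..., m. -/
open Matrix Finset

private def pm (m : ℕ) (r c : ℕ → ℕ) : Matrix (Fin (m+1)) (Fin (m+1)) ℚ :=
  Matrix.of fun i j => ((c (j:ℕ)).choose (r (i:ℕ)) : ℚ)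

private lemma adj_strict {f : ℕ → ℕ} {m : ℕ} (h : ∀ i < m, f i < f (i+1)) :
    ∀ i j, i < j → j ≤ m → f i < f j := by
  intro i j hij hjm
  induction j with
  | zero => omega
  | succ n ih =>
    rcases Nat.lt_or_ge i n with h1 | h1
    · exact (ih h1 (by omega)).trans (h n (by omega))
    · have : i = n := by omega
      subst this; exact h i (by omega)

private lemma adj_mono {f : ℕ → ℕ} {m : ℕ} (h : ∀ i < m, f i < f (i+1)) :
    ∀ i j, i ≤ j → j ≤ m → f i ≤ f j := by
  intro i j hij hjm
  rcases Nat.lt_or_ge i j with h1 | h1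
  · exact (adj_strict h i j h1 hjm).le
  · have : i = j := by omega
    subst this; rfl

private lemma key : ∀ (k m : ℕ) (r c : ℕ → ℕ),
    (∀ i < m, r i < r (i+1)) → (∀ i < m, c i < c (i+1)) →
    (∑ j ∈ Finset.range (m+1), c j) + m ≤ k →
    0 ≤ (pm m r c).det ∧ ((∀ i ≤ m, r i ≤ c i) → 0 < (pm m r c).det) := by
  intro k
  induction k with
  | zero =>
    intro m r c hr hc hk
    have hm : m = 0 := by omega
    subst hm
    have hc0 : c 0 = 0 := by simpa using hk
    by_cases hr0 : r 0 = 0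
    · have : (pm 0 r c).det = 1 := by
        rw [Matrix.det_fin_one]
        simp [pm, hc0, hr0]
      constructor
      · rw [this]; norm_num
      · intro _; rw [this]; norm_num
    · have : (pm 0 r c).det = 0 := by
        rw [Matrix.det_fin_one]
        simp [pm, hc0, Nat.choose_eq_zero_of_lt (by omega : 0 < r 0)]
      constructor
      · rw [this]
      · intro h; exfalso; have := h 0 le_rfl; omega
  | succ k ih =>
    intro m r c hr hc hk
    by_cases hc0 : c 0 = 0
    · by_cases hr0 : r 0 = 0
      · cases m with
        | zero =>
          have : (pm 0 r c).det = 1 := by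
            rw [Matrix.det_fin_one]
            simp [pm, hc0, hr0]
          constructor
          · rw [this]; norm_num
          · intro _; rw [this]; norm_num
        | succ m' =>
          have hdet : (pm (m'+1) r c).det
              = (pm m' (fun i => r (i+1)) (fun j => c (j+1))).det := by
            rw [show (pm (m'+1) r c) = (pm (m'+1) r c) from rfl]
            rw [Matrix.det_succ_column_zero]
            rw [Finset.sum_eq_single 0]
            · have h00 : (pm (m'+1) r c) 0 0 = 1 := by
                simp [pm, hc0, hr0]
              rw [h00]
              simp only [Fin.val_zero, pow_zero, one_mul, Fin.succAbove_zero]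
              congr 1
            · intro i _ hi
              have hipos : 0 < (i : ℕ) := by
                rcases Nat.eq_zero_or_pos (i : ℕ) with h | h
                · exact absurd (Fin.ext h) hi
                · exact h
              have : (pm (m'+1) r c) i 0 = 0 := by
                have : 0 < r (i : ℕ) := by
                  have := adj_strict hr 0 (i : ℕ) hipos (by omega)
                  omega
                simp [pm, hc0, Nat.choose_eq_zero_of_lt this]
              rw [this]; ring
            · intro h; exact absurd (Finset.mem_univ _) h
          have hsum : (∑ j ∈ Finset.range (m'+1), c (j+1)) + m' ≤ k := by
            have := Finset.sum_range_succ' c (m'+1)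
            omega
          have := ih m' (fun i => r (i+1)) (fun j => c (j+1))
            (fun i hi => hr (i+1) (by omega)) (fun i hi => hc (i+1) (by omega)) hsum
          rw [hdet]
          refine ⟨this.1, fun h => this.2 fun i hi => h (i+1) (by omega)⟩
      · constructor
        · have : (pm m r c).det = 0 := by
            apply Matrix.det_eq_zero_of_column_eq_zero 0
            intro i
            have : 0 < r (i : ℕ) := by
              have := adj_mono hr 0 (i : ℕ) (by omega) (Nat.lt_succ_iff.mp i.isLt)
              omega
            simp [pm, hc0, Nat.choose_eq_zero_of_lt this]
          rw [this]
        · intro h; exfalso; have := h 0 (by omega); omega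
    · -- main case : c 0 ≠ 0
      have hc1 : ∀ j ≤ m, 1 ≤ c j := fun j hj => by
        have := adj_mono hc 0 j (by omega) hj; omega
      have hcmono : ∀ i < m, c i - 1 < c (i+1) - 1 := by
        intro i hi
        have := hc i hi; have := hc1 i (by omega); omega
      have hsum : (∑ j ∈ Finset.range (m+1), (c j - 1)) + m ≤ k := by
        have e : ∑ j ∈ Finset.range (m+1), c j
            = ∑ j ∈ Finset.range (m+1), ((c j - 1) + 1) :=
          Finset.sum_congr rfl (fun j hj => by
            have := hc1 j (Nat.lt_succ_iff.mp (Finset.mem_range.mp hj)); omega)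
        rw [Finset.sum_add_distrib, Finset.sum_const, Finset.card_range, smul_eq_mul, mul_one] at e
        omega
      set g : Fin (m+1) → Bool → (Fin (m+1) → ℚ) := fun i b j =>
        if b then (if r (i:ℕ) = 0 then 0 else ((c (j:ℕ) - 1).choose (r (i:ℕ) - 1) : ℚ))
        else ((c (j:ℕ) - 1).choose (r (i:ℕ)) : ℚ) with hg
      have hkey : ∀ a b : ℕ, 1 ≤ a → ((a).choose b : ℚ)
          = (if b = 0 then 0 else ((a - 1).choose (b - 1) : ℚ)) + ((a - 1).choose b : ℚ) := by
        intro a b ha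
        obtain ⟨d, rfl⟩ : ∃ d, a = d + 1 := ⟨a - 1, by omega⟩
        rcases b with _ | s
        · simp
        · rw [if_neg (by omega)]
          simp only [Nat.add_sub_cancel, Nat.succ_sub_one]
          rw [Nat.choose_succ_succ]
          push_cast; ring
      have h1 : pm m r c = (fun i => ∑ b : Bool, g i b) := by
        funext i j
        rw [Fintype.sum_bool]
        simp only [hg, pm, Matrix.of_apply, Pi.add_apply, if_true,
          Bool.false_eq_true, if_false]
        exact hkey _ _ (hc1 _ (Nat.lt_succ_iff.mp j.isLt))
      have hexp : (pm m r c).det = ∑ ε : Fin (m+1) → Bool,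
          Matrix.det (Matrix.of fun i j => g i (ε i) j) := by
        calc (pm m r c).det
            = Matrix.detRowAlternating (fun i => ∑ b : Bool, g i b) := by rw [← h1]; rfl
          _ = ∑ ε : Fin (m+1) → Bool, Matrix.detRowAlternating (fun i => g i (ε i)) :=
              Matrix.detRowAlternating.toMultilinearMap.map_sum g
          _ = ∑ ε : Fin (m+1) → Bool, Matrix.det (Matrix.of fun i j => g i (ε i) j) := rfl
      set r' : (Fin (m+1) → Bool) → ℕ → ℕ := fun ε i =>
        if h : i < m + 1 then (if ε ⟨i, h⟩ = true then r i - 1 else r i) else r i with hr'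
      have hbounds : ∀ (ε : Fin (m+1) → Bool), ∀ i ≤ m, r i - 1 ≤ r' ε i ∧ r' ε i ≤ r i := by
        intro ε i hi
        simp only [hr']
        rw [dif_pos (by omega : i < m + 1)]
        split <;> omega
      have hM : ∀ ε : Fin (m+1) → Bool, (∀ i : Fin (m+1), ε i = true → r (i:ℕ) ≠ 0) →
          (Matrix.of fun i j => g i (ε i) j) = pm m (r' ε) (fun j => c j - 1) := by
        intro ε hne
        ext i j
        simp only [Matrix.of_apply, pm, hg, hr']
        rw [dif_pos i.isLt]
        cases hb : ε i with
        | false => simp [Fin.eta, hb]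
        | true => simp [Fin.eta, hb, hne i hb]
      have hterm0 : ∀ ε : Fin (m+1) → Bool,
          0 ≤ Matrix.det (Matrix.of fun i j => g i (ε i) j) := by
        intro ε
        by_cases hz : ∃ i : Fin (m+1), ε i = true ∧ r (i:ℕ) = 0
        · obtain ⟨i, hb, h0⟩ := hz
          rw [Matrix.det_eq_zero_of_row_eq_zero i (fun j => by simp [hg, hb, h0])]
        · push_neg at hz
          have hne : ∀ i : Fin (m+1), ε i = true → r (i:ℕ) ≠ 0 := hz
          rw [hM ε hne]
          by_cases hdup : ∃ i, i < m ∧ r' ε i = r' ε (i+1)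
          · obtain ⟨i, him, hieq⟩ := hdup
            have hij : (⟨i, by omega⟩ : Fin (m+1)) ≠ ⟨i+1, by omega⟩ := by
              simp [Fin.ext_iff]
            have hroweq : (pm m (r' ε) (fun j => c j - 1)) ⟨i, by omega⟩
                = (pm m (r' ε) (fun j => c j - 1)) ⟨i+1, by omega⟩ := by
              funext j
              simp [pm, hieq]
            rw [Matrix.det_zero_of_row_eq hij hroweq]
          · push_neg at hdup
            have hmono : ∀ i < m, r' ε i < r' ε (i+1) := by
              intro i hi
              have h1 := hbounds ε i (by omega)
              have h2 := hbounds ε (i+1) (by omega)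
              have h3 := hr i hi
              have h4 := hdup i hi
              omega
            exact (ih m (r' ε) (fun j => c j - 1) hmono hcmono hsum).1
      constructor
      · rw [hexp]
        exact Finset.sum_nonneg (fun ε _ => hterm0 ε)
      · intro hdiag
        set εs : Fin (m+1) → Bool := fun i => decide (r (i:ℕ) = c (i:ℕ)) with hεs
        have hne : ∀ i : Fin (m+1), εs i = true → r (i:ℕ) ≠ 0 := by
          intro i hb
          have h2 : r (i:ℕ) = c (i:ℕ) := by
            have := hb; simp only [hεs, decide_eq_true_eq] at this; exact this
          have := hc1 (i:ℕ) (Nat.lt_succ_iff.mp i.isLt)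
          omega
        have hreq : ∀ i, (h : i ≤ m) → ((r i = c i → r' εs i = r i - 1) ∧ (r i ≠ c i → r' εs i = r i)) := by
          intro i hi
          simp only [hr', hεs]
          rw [dif_pos (by omega : i < m + 1)]
          constructor
          · intro h; rw [if_pos (by simpa using h)]
          · intro h; rw [if_neg (by simpa using h)]
        have hmono : ∀ i < m, r' εs i < r' εs (i+1) := by
          intro i hi
          have d1 := hreq i (by omega)
          have d2 := hreq (i+1) (by omega)
          have hri := hdiag i (by omega)
          have hri1 := hdiag (i+1) (by omega)
          have h5 := hr i hi
          have h6 := hc i hi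
          have h7 := hc1 i (by omega)
          by_cases e1 : r i = c i <;> by_cases e2 : r (i+1) = c (i+1)
          · rw [d1.1 e1, d2.1 e2]; omega
          · rw [d1.1 e1, d2.2 e2]; omega
          · rw [d1.2 e1, d2.1 e2]; omega
          · rw [d1.2 e1, d2.2 e2]; omega
        have hd : ∀ i ≤ m, r' εs i ≤ c i - 1 := by
          intro i hi
          have d := hreq i hi
          have h8 := hdiag i hi
          have h9 := hc1 i hi
          by_cases e1 : r i = c i
          · rw [d.1 e1]; omega
          · rw [d.2 e1]; omega
        have hpos := (ih m (r' εs) (fun j => c j - 1) hmono hcmono hsum).2 hd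
        rw [hexp]
        refine lt_of_lt_of_le ?_
          (Finset.single_le_sum (fun ε _ => hterm0 ε) (Finset.mem_univ εs))
        rw [hM εs hne]
        exact hpos


/-- The square submatrix of the Pascal upper-triangular matrix with rows
`r 0, …, r m` and columns `c 0, …, c m` (entry `(i,j)` equal to `C(c j, r i)`)
is invertible iff no diagonal entry is zero, i.e. iff `C(c i, r i) ≠ 0`
for all `i = 0, …, m`. -/
theorem pascal_square_submatrix_invertible_iff_diagonal_ne_zero
    (m : ℕ) (r c : ℕ → ℕ) (hr : StrictMono r) (hc : StrictMono c) :
    IsUnit (Matrix.of fun i j : Fin (m + 1) =>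
        ((c (j : ℕ)).choose (r (i : ℕ)) : ℚ)) ↔
      ∀ i ≤ m, (c i).choose (r i) ≠ 0 := by
  show IsUnit (pm m r c) ↔ _
  constructor
  · intro hU
    by_contra hcon
    push_neg at hcon
    obtain ⟨i, him, hzero⟩ := hcon
    have hlt : c i < r i := Nat.choose_eq_zero_iff.mp hzero
    -- build a kernel vector supported on the first i+1 coordinates
    set w : Fin (i+1) → (Fin i → ℚ) :=
      fun j t => ((c (j:ℕ)).choose (r (t:ℕ)) : ℚ) with hw
    have hnli : ¬ LinearIndependent ℚ w := by
      intro hli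
      have h1 := hli.fintype_card_le_finrank
      rw [Module.finrank_fintype_fun_eq_card] at h1
      simp [Fintype.card_fin] at h1
    obtain ⟨gg, hgsum, j0, hj0⟩ := Fintype.not_linearIndependent_iff.mp hnli
    set v : Fin (m+1) → ℚ :=
      fun j => if hj : (j:ℕ) < i + 1 then gg ⟨j, hj⟩ else 0 with hv
    have hv0 : v ≠ 0 := by
      intro hv0
      apply hj0
      have := congrFun hv0 ⟨(j0:ℕ), by omega⟩
      simp [hv, j0.isLt, Fin.eta] at this
      exact this (by have := j0.isLt; omega)
    have e : Fin (i+1) ↪ Fin (m+1) := Fin.castLEEmb (by omega)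
    have hmv : pm m r c *ᵥ v = 0 := by
      funext t
      show ∑ j, pm m r c t j * v j = 0
      have h0 : ∀ j ∈ Finset.univ, j ∉ Finset.univ.map (Fin.castLEEmb (show i+1 ≤ m+1 by omega))
          → pm m r c t j * v j = 0 := by
        intro j _ hj
        have : ¬ ((j:ℕ) < i + 1) := by
          intro hlt'
          exact hj (Finset.mem_map.mpr ⟨⟨(j:ℕ), hlt'⟩, Finset.mem_univ _, by
            simp [Fin.castLEEmb, Fin.ext_iff]⟩)
        rw [hv]
        simp only [dif_neg this, mul_zero]
      have hsplit : ∑ j, pm m r c t j * v j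
          = ∑ j : Fin (i+1), pm m r c t (Fin.castLE (by omega) j) * gg j := by
        rw [← Finset.sum_subset (Finset.subset_univ _) h0, Finset.sum_map]
        refine Finset.sum_congr rfl (fun j _ => ?_)
        simp only [Fin.castLEEmb_apply]
        have : v (Fin.castLE (by omega : i+1 ≤ m+1) j) = gg j := by
          rw [hv]
          simp [Fin.castLE]
          intro h; have := j.isLt; omega
        rw [this]
      rw [hsplit]
      rcases Nat.lt_or_ge (t:ℕ) i with ht | ht
      · have := congrFun hgsum ⟨(t:ℕ), ht⟩
        simp only [Finset.sum_apply, Pi.smul_apply, Pi.zero_apply, smul_eq_mul, hw] at this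
        rw [← this]
        refine Finset.sum_congr rfl (fun j _ => ?_)
        simp [pm, Fin.castLE, mul_comm]
      · apply Finset.sum_eq_zero
        intro j _
        have hj : (j:ℕ) ≤ i := Nat.lt_succ_iff.mp j.isLt
        have hcc : c (j:ℕ) < r (t:ℕ) := by
          have h1 : c (j:ℕ) ≤ c i := hc.monotone hj
          have h2 : r i ≤ r (t:ℕ) := hr.monotone ht
          omega
        have hz : pm m r c t (Fin.castLE (by omega : i+1 ≤ m+1) j) = 0 := by
          simp [pm, Nat.choose_eq_zero_of_lt hcc]
        rw [hz, zero_mul]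
    have hdet : (pm m r c).det = 0 :=
      Matrix.exists_mulVec_eq_zero_iff.mp ⟨v, hv0, hmv⟩
    have := (Matrix.isUnit_iff_isUnit_det _).mp hU
    rw [hdet] at this
    simp at this
  · intro h
    apply (Matrix.isUnit_iff_isUnit_det _).mpr
    have hpos := (key ((∑ j ∈ Finset.range (m+1), c j) + m) m r c
      (fun i _ => hr (by omega : i < i + 1)) (fun i _ => hc (by omega : i < i + 1)) le_rfl).2
      (fun i hi => by
        have := h i hi
        rcases Nat.lt_or_ge (c i) (r i) with hlt | hge
        · exact absurd (Nat.choose_eq_zero_of_lt hlt) this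
        · exact hge)
    exact (hpos.ne').isUnit
end

section
/- Let r = [r_0, ..., r_m] and c = [c_0, ..., c_n] be strictly increasing sequences of natural numbers, and let {r̂, ĉ} be an ordered sub-pair for {r, c} of length p+1. Then the (p+1)×(p+1) matrix T_{r̂,ĉ} with (i,j) entry C(ĉ_j, r̂_i) is invertible. -/
/-- The submatrix of the Pascal upper-triangular matrix with rows
`r 0, …, r m` and columns `c 0, …, c n`: its `(i,j)` entry is the binomial
coefficient `C(c j, r i)` (which is `0` when `r i > c j`). -/
def pascalSub (r c : ℕ → ℕ) (m n : ℕ) : Matrix (Fin (m + 1)) (Fin (n + 1)) ℚ :=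
  Matrix.of fun i j => ((c (j : ℕ)).choose (r (i : ℕ)) : ℚ)

/-- `{r ∘ α, c ∘ β}` (restricted to indices `0, …, p`) is an ordered sub-pair of
length `p + 1` for the pair of finite sequences `[r 0, …, r m]`, `[c 0, …, c n]`:
`α` and `β` are strictly increasing selections of indices (so `r ∘ α` is a
subsequence of `[r 0, …, r m]` and `c ∘ β` is a subsequence of `[c 0, …, c n]`)
and `r (α i) ≤ c (β i)` for all `i = 0, …, p`. -/
def OrderedSubPair (r c : ℕ → ℕ) (m n p : ℕ) (α β : ℕ → ℕ) : Prop :=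
  StrictMonoOn α (Set.Iic p) ∧ StrictMonoOn β (Set.Iic p) ∧
    α p ≤ m ∧ β p ≤ n ∧ ∀ i ≤ p, r (α i) ≤ c (β i)

open Finset


lemma hockey_nat (m : ℕ) : ∀ a b : ℕ, a ≤ b →
    (∑ u ∈ Finset.Ico a b, u.choose m) + a.choose (m+1) = b.choose (m+1) := by
  intro a b hab
  induction b, hab using Nat.le_induction with
  | base => simp
  | succ b hab ih =>
      rw [Finset.sum_Ico_succ_top hab, Nat.choose_succ_succ' b m]
      omega

lemma hockey_rat (m a b : ℕ) (hab : a ≤ b) :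
    (∑ u ∈ Finset.Ico a b, (u.choose m : ℚ)) = (b.choose (m+1) : ℚ) - a.choose (m+1) := by
  have := hockey_nat m a b hab
  have : ((∑ u ∈ Finset.Ico a b, u.choose m) + a.choose (m+1) : ℚ) = b.choose (m+1) := by
    exact_mod_cast congrArg (Nat.cast : ℕ → ℚ) this
  push_cast at this ⊢
  linarith

lemma det_scale (p : ℕ) (s t : Fin (p+1) → ℕ) (hs1 : ∀ i, 1 ≤ s i) (ht1 : ∀ j, 1 ≤ t j) :
    (Matrix.of fun i j : Fin (p+1) => ((t j).choose (s i) : ℚ)).det * ∏ i, (s i : ℚ)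
      = (Matrix.of fun i j : Fin (p+1) => ((t j - 1).choose (s i - 1) : ℚ)).det * ∏ j, (t j : ℚ) := by
  have hmat : (Matrix.diagonal fun i => (s i : ℚ)) *
      (Matrix.of fun i j : Fin (p+1) => ((t j).choose (s i) : ℚ))
      = (Matrix.of fun i j : Fin (p+1) => ((t j - 1).choose (s i - 1) : ℚ)) *
        (Matrix.diagonal fun j => (t j : ℚ)) := by
    ext i j
    rw [Matrix.diagonal_mul, Matrix.mul_diagonal]
    have key : (t j) * ((t j - 1).choose (s i - 1)) = (t j).choose (s i) * s i := by
      have h1 := Nat.add_one_mul_choose_eq (t j - 1) (s i - 1)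
      have e1 : t j - 1 + 1 = t j := Nat.succ_pred_eq_of_pos (ht1 j)
      have e2 : s i - 1 + 1 = s i := Nat.succ_pred_eq_of_pos (hs1 i)
      rwa [e1, e2] at h1
    have : ((t j : ℚ)) * ((t j - 1).choose (s i - 1) : ℚ) = ((t j).choose (s i) : ℚ) * s i := by
      exact_mod_cast congrArg (Nat.cast : ℕ → ℚ) key
    simp only [Matrix.of_apply]
    linarith [this]
  have h := congrArg Matrix.det hmat
  rw [Matrix.det_mul, Matrix.det_mul, Matrix.det_diagonal, Matrix.det_diagonal] at h
  rw [mul_comm]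
  exact h

lemma det_expand (q : ℕ) (s t : Fin (q+2) → ℕ) (hs : StrictMono s) (ht : StrictMono t) (hs0 : s 0 = 0) :
    (Matrix.of fun i j : Fin (q+2) => ((t j).choose (s i) : ℚ)).det
    = ∑ u ∈ Fintype.piFinset (fun j : Fin (q+1) => Finset.Ico (t j.castSucc) (t j.succ)),
        (Matrix.of fun i j : Fin (q+1) => ((u j).choose (s i.succ - 1) : ℚ)).det := by
  set A : Matrix (Fin (q+2)) (Fin (q+2)) ℚ :=
    Matrix.of fun i j : Fin (q+2) => ((t j).choose (s i) : ℚ) with hA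
  set U : Matrix (Fin (q+2)) (Fin (q+2)) ℚ :=
    Matrix.of fun k j : Fin (q+2) =>
      Fin.cases (if k = 0 then (1:ℚ) else 0)
        (fun l => (if k = l.succ then (1:ℚ) else 0) - (if k = l.castSucc then 1 else 0)) j
    with hU
  have hUtri : U.BlockTriangular id := by
    intro k j hjk
    simp only [id] at hjk
    induction j using Fin.cases with
    | zero =>
        have : k ≠ 0 := by intro h; subst h; exact absurd hjk (lt_irrefl _)
        simp [hU, this]
    | succ l =>
        have h1 : k ≠ l.succ := by intro h; subst h; exact absurd hjk (lt_irrefl _)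
        have h2 : k ≠ l.castSucc := by
          intro h; subst h
          have : l.castSucc < l.succ := Fin.castSucc_lt_succ (i := l)
          exact absurd (hjk.trans this) (lt_irrefl _)
        simp [hU, h1, h2]
  have hUdet : U.det = 1 := by
    rw [Matrix.det_of_upperTriangular hUtri]
    apply Finset.prod_eq_one
    intro k _
    induction k using Fin.cases with
    | zero => simp [hU]
    | succ l =>
        have : l.succ ≠ l.castSucc := by
          simp [Fin.ext_iff]
        simp [hU, this]
  have hdet : A.det = (A * U).det := by rw [Matrix.det_mul, hUdet, mul_one]
  -- compute A * U
  have hAU : ∀ (i j : Fin (q+2)), (A * U) i j =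
      Fin.cases (((t 0).choose (s i) : ℚ))
        (fun l => ((t l.succ).choose (s i) : ℚ) - ((t l.castSucc).choose (s i) : ℚ)) j := by
    intro i j
    rw [Matrix.mul_apply]
    induction j using Fin.cases with
    | zero => simp [hU, hA, mul_ite]
    | succ l => simp [hU, hA, mul_sub, mul_ite, Finset.sum_sub_distrib]
  -- expand along row 0
  have hrow0 : ∀ j : Fin (q+2), (A * U) 0 j = if j = 0 then 1 else 0 := by
    intro j
    rw [hAU]
    induction j using Fin.cases with
    | zero => simp [hs0]
    | succ l => simp [hs0, Fin.succ_ne_zero]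
  rw [hdet, Matrix.det_succ_row_zero]
  rw [Finset.sum_eq_single (0 : Fin (q+2))]
  rotate_left
  · intro j _ hj
    rw [hrow0, if_neg hj]
    ring
  · intro h; exact absurd (Finset.mem_univ _) h
  rw [hrow0, if_pos rfl, Fin.succAbove_zero]
  simp only [Fin.val_zero, pow_zero, one_mul]
  -- the minor
  have hminor : ((A * U).submatrix Fin.succ Fin.succ) =
      Matrix.of fun i j : Fin (q+1) =>
        ∑ u ∈ Finset.Ico (t j.castSucc) (t j.succ), ((u.choose (s i.succ - 1)) : ℚ) := by
    ext i j
    rw [Matrix.submatrix_apply, hAU]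
    simp only [Fin.cases_succ, Matrix.of_apply]
    rw [hockey_rat (s i.succ - 1) (t j.castSucc) (t j.succ) (le_of_lt (ht (Fin.castSucc_lt_succ (i := j))))]
    have hs1 : 1 ≤ s i.succ := by
      have : s 0 < s i.succ := hs (Fin.succ_pos i)
      omega
    rw [Nat.sub_add_cancel hs1]
  rw [hminor, ← Matrix.det_transpose]
  have htrans : (Matrix.of fun i j : Fin (q+1) =>
      ∑ u ∈ Finset.Ico (t j.castSucc) (t j.succ), ((u.choose (s i.succ - 1)) : ℚ)).transpose
      = fun j => ∑ u ∈ Finset.Ico (t j.castSucc) (t j.succ),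
          (fun i : Fin (q+1) => ((u.choose (s i.succ - 1)) : ℚ)) := by
    ext j i
    simp [Matrix.transpose_apply, Finset.sum_apply]
  have expand := MultilinearMap.map_sum_finset
    (f := (Matrix.detRowAlternating :
      (Fin (q+1) → ℚ) [⋀^Fin (q+1)]→ₗ[ℚ] ℚ).toMultilinearMap)
    (g := fun (j : Fin (q+1)) (u : ℕ) => fun i : Fin (q+1) => ((u.choose (s i.succ - 1)) : ℚ))
    (A := fun j : Fin (q+1) => Finset.Ico (t j.castSucc) (t j.succ))
  rw [htrans]
  exact expand.trans (Finset.sum_congr rfl fun u _ => Matrix.det_transpose _)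

lemma pascal_key (N : ℕ) : ∀ (p : ℕ) (s t : Fin (p+1) → ℕ), StrictMono s → StrictMono t →
    p + ∑ i, s i ≤ N →
    0 ≤ (Matrix.of fun i j : Fin (p+1) => ((t j).choose (s i) : ℚ)).det ∧
    ((∀ i, s i ≤ t i) → 0 < (Matrix.of fun i j : Fin (p+1) => ((t j).choose (s i) : ℚ)).det) := by
  induction N using Nat.strong_induction_on with
  | _ N ih =>
    intro p s t hs ht hN
    by_cases hs0 : s 0 = 0
    · -- first row index is 0
      match p, s, t, hs, ht, hN with
      | 0, s, t, hs, ht, hN =>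
        constructor
        · rw [Matrix.det_fin_one]
          show (0:ℚ) ≤ (((t 0).choose (s 0) : ℕ) : ℚ)
          exact Nat.cast_nonneg _
        · intro hst
          rw [Matrix.det_fin_one]
          show (0:ℚ) < (((t 0).choose (s 0) : ℕ) : ℚ)
          exact_mod_cast Nat.choose_pos (hst 0)
      | (q+1), s, t, hs, ht, hN =>
        have hN' : q + 1 + ∑ i : Fin (q+2), s i ≤ N := hN
        clear hN
        rw [det_expand q s t hs ht hs0]
        have hs1 : ∀ i : Fin (q+1), 1 ≤ s i.succ := by
          intro i
          have : s 0 < s i.succ := hs (Fin.succ_pos i)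
          omega
        have hsum : (∑ i : Fin (q+1), (s i.succ - 1)) + (q+1) = ∑ i : Fin (q+2), s i := by
          have h1 : ∑ i : Fin (q+2), s i = s 0 + ∑ i : Fin (q+1), s i.succ :=
            Fin.sum_univ_succ s
          have h2 : ∑ i : Fin (q+1), (s i.succ - 1) + ∑ _i : Fin (q+1), (1:ℕ)
              = ∑ i : Fin (q+1), s i.succ := by
            rw [← Finset.sum_add_distrib]
            exact Finset.sum_congr rfl fun i _ => by have := hs1 i; omega
          have h3 : ∑ _i : Fin (q+1), (1:ℕ) = q + 1 := by simp
          omega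
        have hmeas : q + ∑ i : Fin (q+1), (s i.succ - 1) < N := by omega
        have hsmono : StrictMono (fun i : Fin (q+1) => s i.succ - 1) := by
          intro i j hij
          have h1 : s i.succ < s j.succ := hs (Fin.succ_lt_succ_iff.mpr hij)
          have h2 := hs1 i
          dsimp only
          omega
        have hterm : ∀ u ∈ Fintype.piFinset
            (fun j : Fin (q+1) => Finset.Ico (t j.castSucc) (t j.succ)),
            0 ≤ (Matrix.of fun i j : Fin (q+1) => ((u j).choose (s i.succ - 1) : ℚ)).det := by
          intro u hu
          rw [Fintype.mem_piFinset] at hu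
          have hu' : ∀ j, t j.castSucc ≤ u j ∧ u j < t j.succ := by
            intro j; have := hu j; rw [Finset.mem_Ico] at this; exact this
          have humono : StrictMono u := by
            intro i j hij
            have h1 : (u i) < t i.succ := (hu' i).2
            have h2 : t j.castSucc ≤ u j := (hu' j).1
            have h3 : t i.succ ≤ t j.castSucc := by
              apply ht.monotone
              rw [Fin.le_def]
              simp only [Fin.val_succ, Fin.coe_castSucc]
              exact hij
            omega
          exact (ih _ hmeas q (fun i => s i.succ - 1) u hsmono humono le_rfl).1
        constructor
        · exact Finset.sum_nonneg hterm
        · intro hst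
          apply Finset.sum_pos' hterm
          refine ⟨fun j => t j.succ - 1, ?_, ?_⟩
          · rw [Fintype.mem_piFinset]
            intro j
            rw [Finset.mem_Ico]
            have h1 : t j.castSucc < t j.succ := ht (Fin.castSucc_lt_succ (i := j))
            omega
          · have htmono : StrictMono (fun j : Fin (q+1) => t j.succ - 1) := by
              intro i j hij
              have h1 : t i.succ < t j.succ := ht (Fin.succ_lt_succ_iff.mpr hij)
              have h2 : t 0 < t i.succ := ht (Fin.succ_pos i)
              show t i.succ - 1 < t j.succ - 1
              omega
            refine (ih _ hmeas q (fun i => s i.succ - 1) (fun j => t j.succ - 1)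
              hsmono htmono le_rfl).2 ?_
            intro i
            have h1 := hst i.succ
            have h2 := hs1 i
            exact (by omega : s i.succ - 1 ≤ t i.succ - 1)
    · -- s 0 ≥ 1
      have hs1 : ∀ i, 1 ≤ s i := by
        intro i
        have : s 0 ≤ s i := hs.monotone (Fin.zero_le i)
        omega
      by_cases ht0 : t 0 = 0
      · -- column 0 is zero
        have hzero : (Matrix.of fun i j : Fin (p+1) => ((t j).choose (s i) : ℚ)).det = 0 := by
          apply Matrix.det_eq_zero_of_column_eq_zero 0
          intro i
          have h0 : (t 0).choose (s i) = 0 := by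
            rw [ht0]
            exact Nat.choose_eq_zero_of_lt (by have := hs1 i; omega)
          show (((t 0).choose (s i) : ℕ) : ℚ) = 0
          rw [h0]
          exact Nat.cast_zero
        rw [hzero]
        refine ⟨le_rfl, ?_⟩
        intro hst
        exfalso
        have h1 := hst 0
        have h2 := hs1 0
        omega
      · -- scale down
        have ht1 : ∀ j, 1 ≤ t j := by
          intro j
          have : t 0 ≤ t j := ht.monotone (Fin.zero_le j)
          omega
        have hscale := det_scale p s t hs1 ht1
        have hsmono : StrictMono (fun i => s i - 1) := by
          intro i j hij
          have h1 := hs hij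
          have h2 := hs1 i
          dsimp only
          omega
        have htmono : StrictMono (fun j => t j - 1) := by
          intro i j hij
          have h1 := ht hij
          have h2 := ht1 i
          dsimp only
          omega
        have hmeas : p + ∑ i : Fin (p+1), (s i - 1) < N := by
          have h2 : ∑ i : Fin (p+1), (s i - 1) + ∑ _i : Fin (p+1), (1:ℕ)
              = ∑ i : Fin (p+1), s i := by
            rw [← Finset.sum_add_distrib]
            exact Finset.sum_congr rfl fun i _ => by have := hs1 i; omega
          have h3 : ∑ _i : Fin (p+1), (1:ℕ) = p + 1 := by simp
          omega
        have hprods : (0:ℚ) < ∏ i, (s i : ℚ) := by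
          apply Finset.prod_pos
          intro i _
          exact_mod_cast hs1 i
        have hprodt : (0:ℚ) < ∏ j, (t j : ℚ) := by
          apply Finset.prod_pos
          intro j _
          exact_mod_cast ht1 j
        have ihh := ih _ hmeas p (fun i => s i - 1) (fun j => t j - 1) hsmono htmono le_rfl
        constructor
        · have h1 : 0 ≤ (Matrix.of fun i j : Fin (p+1) =>
              ((t j - 1).choose (s i - 1) : ℚ)).det * ∏ j, (t j : ℚ) :=
            mul_nonneg ihh.1 (le_of_lt hprodt)
          rw [← hscale] at h1
          by_contra hcon
          push_neg at hcon
          have h2 : (Matrix.of fun i j : Fin (p+1) => ((t j).choose (s i) : ℚ)).det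
              * ∏ i, (s i : ℚ) < 0 := mul_neg_of_neg_of_pos hcon hprods
          linarith
        · intro hst
          have hst' : ∀ i, (fun i => s i - 1) i ≤ (fun j => t j - 1) i := by
            intro i
            have := hst i
            dsimp only
            omega
          have h1 : 0 < (Matrix.of fun i j : Fin (p+1) =>
              ((t j - 1).choose (s i - 1) : ℚ)).det * ∏ j, (t j : ℚ) :=
            mul_pos (ihh.2 hst') hprodt
          rw [← hscale] at h1
          by_contra hcon
          push_neg at hcon
          have h2 : (Matrix.of fun i j : Fin (p+1) => ((t j).choose (s i) : ℚ)).det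
              * ∏ i, (s i : ℚ) ≤ 0 :=
            mul_nonpos_iff.mpr (Or.inr ⟨hcon, le_of_lt hprods⟩)
          linarith


/-- If `{r ∘ α, c ∘ β}` is an ordered sub-pair of length `p + 1` for
`{[r 0, …, r m], [c 0, …, c n]}`, then the `(p+1) × (p+1)` Pascal submatrix
`T_{r̂,ĉ}`, with `(i,j)` entry `C(c (β j), r (α i))`, is invertible. -/
theorem pascal_orderedSubPair_submatrix_invertible
    (m n p : ℕ) (r c α β : ℕ → ℕ) (hr : StrictMono r) (hc : StrictMono c)
    (hsub : OrderedSubPair r c m n p α β) :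
    IsUnit (Matrix.of fun i j : Fin (p + 1) =>
        ((c (β (j : ℕ))).choose (r (α (i : ℕ))) : ℚ)) := by
  obtain ⟨hα, hβ, hαm, hβn, hle⟩ := hsub
  have hs : StrictMono (fun i : Fin (p+1) => r (α (i : ℕ))) := by
    intro i j hij
    exact hr (hα (Set.mem_Iic.mpr (Fin.is_le i)) (Set.mem_Iic.mpr (Fin.is_le j)) hij)
  have ht : StrictMono (fun j : Fin (p+1) => c (β (j : ℕ))) := by
    intro i j hij
    exact hc (hβ (Set.mem_Iic.mpr (Fin.is_le i)) (Set.mem_Iic.mpr (Fin.is_le j)) hij)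
  have hpos := (pascal_key (p + ∑ i : Fin (p+1), r (α (i : ℕ))) p
      (fun i : Fin (p+1) => r (α (i : ℕ))) (fun j : Fin (p+1) => c (β (j : ℕ)))
      hs ht le_rfl).2 (fun i => hle (i : ℕ) (Fin.is_le i))
  rw [Matrix.isUnit_iff_isUnit_det]
  exact isUnit_iff_ne_zero.mpr (ne_of_gt hpos)
end

section
/- Let r = [r_0, ..., r_m] and c = [c_0, ..., c_n] be strictly increasing sequences of natural numbers, and let {r̂, ĉ} be an ordered sub-pair for {r, c} of length p+1. Then the (p+1)×(n+1) matrix T_{r̂,c} with (i,j) entry C(c_j, r̂_i) has full row rank, i.e., its rank equals p+1. -/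
namespace PascalAux

/-- The square Pascal minor matrix: rows indexed by `b`, columns by `a`. -/
def pm (p : ℕ) (a b : ℕ → ℕ) : Matrix (Fin (p + 1)) (Fin (p + 1)) ℚ :=
  Matrix.of fun j i => ((b (j : ℕ)).choose (a (i : ℕ)) : ℚ)

lemma adj_mono {a : ℕ → ℕ} {p : ℕ} (h : ∀ i < p, a i < a (i + 1)) :
    ∀ {i j : ℕ}, i ≤ j → j ≤ p → a i ≤ a j := by
  intro i j hij hj
  induction j, hij using Nat.le_induction with
  | base => exact le_rfl
  | succ j hij ih => exact (ih (by omega)).trans (h j (by omega)).le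

lemma adj_smono {a : ℕ → ℕ} {p : ℕ} (h : ∀ i < p, a i < a (i + 1)) :
    ∀ {i j : ℕ}, i < j → j ≤ p → a i < a j := by
  intro i j hij hj
  obtain ⟨k, rfl⟩ : ∃ k, j = k + 1 := ⟨j - 1, by omega⟩
  exact (adj_mono h (by omega) (by omega)).trans_lt (h k (by omega))

lemma choose_telescope (k : ℕ) {c d : ℕ} (h : c ≤ d) :
    ((d.choose (k + 1) : ℚ)) - (c.choose (k + 1) : ℚ) =
      ∑ x ∈ Finset.Ico c d, (x.choose k : ℚ) := by
  induction d, h using Nat.le_induction with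
  | base => simp
  | succ d hcd ih =>
    rw [Finset.sum_Ico_succ_top hcd, ← ih, Nat.choose_succ_succ d k]
    push_cast
    ring

lemma tele (F : ℕ → ℚ) (j : ℕ) :
    ∑ k ∈ Finset.range (j + 1), (F k - if k = 0 then 0 else F (k - 1)) = F j := by
  induction j with
  | zero => simp
  | succ j ihj =>
    rw [Finset.sum_range_succ, ihj]
    simp

theorem key : ∀ (M : ℕ) (p : ℕ) (a b : ℕ → ℕ),
    p + (∑ j ∈ Finset.range (p + 1), b j) ≤ M →
    (∀ i < p, a i < a (i + 1)) → (∀ j < p, b j < b (j + 1)) →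
    0 ≤ (pm p a b).det ∧ ((∀ i ≤ p, a i ≤ b i) → 0 < (pm p a b).det) := by
  intro M
  induction M using Nat.strong_induction_on with
  | _ M ih =>
  intro p a b hM ha hb
  by_cases ha0 : a 0 = 0
  · cases p with
    | zero =>
      have hdet1 : (pm 0 a b).det = 1 := by
        rw [Matrix.det_fin_one]
        simp [pm, ha0]
      exact ⟨by rw [hdet1]; norm_num, fun _ => by rw [hdet1]; norm_num⟩
    | succ q =>
      -- the difference matrix
      set N : Matrix (Fin (q + 2)) (Fin (q + 2)) ℚ :=
        Matrix.of (fun k i => ((b (k : ℕ)).choose (a (i : ℕ)) : ℚ) -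
          if (k : ℕ) = 0 then 0 else ((b ((k : ℕ) - 1)).choose (a (i : ℕ)) : ℚ)) with hNdef
      set L : Matrix (Fin (q + 2)) (Fin (q + 2)) ℚ :=
        Matrix.of (fun j k => if (k : ℕ) ≤ (j : ℕ) then (1 : ℚ) else 0) with hLdef
      have hLN : pm (q + 1) a b = L * N := by
        ext j i
        rw [Matrix.mul_apply]
        have h1 : ∀ k : Fin (q + 2), L j k * N k i =
            if (k : ℕ) ∈ Finset.range ((j : ℕ) + 1) then
              ((fun t => ((b t).choose (a (i : ℕ)) : ℚ)) (k : ℕ) -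
                if (k : ℕ) = 0 then 0 else (fun t => ((b t).choose (a (i : ℕ)) : ℚ)) ((k : ℕ) - 1))
            else 0 := by
          intro k
          simp only [hLdef, hNdef, Matrix.of_apply, Finset.mem_range, Nat.lt_succ_iff]
          by_cases hk : (k : ℕ) ≤ (j : ℕ) <;> simp [hk]
        rw [Finset.sum_congr rfl (fun k _ => h1 k),
          Fin.sum_univ_eq_sum_range (fun t =>
            if t ∈ Finset.range ((j : ℕ) + 1) then
              ((fun t => ((b t).choose (a (i : ℕ)) : ℚ)) t -
                if t = 0 then 0 else (fun t => ((b t).choose (a (i : ℕ)) : ℚ)) (t - 1))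
            else 0) (q + 2),
          Finset.sum_ite_mem,
          Finset.inter_eq_right.mpr (Finset.range_subset_range.mpr (by omega)),
          tele (fun t => ((b t).choose (a (i : ℕ)) : ℚ)) (j : ℕ)]
        rfl
      have hdetL : L.det = 1 := by
        rw [Matrix.det_of_lowerTriangular L (fun i j hij => by
          have : (i : ℕ) < (j : ℕ) := hij
          simp only [hLdef, Matrix.of_apply, if_neg (by omega : ¬ (j : ℕ) ≤ (i : ℕ))])]
        simp [hLdef]
      have hN0 : ∀ k : Fin (q + 2), N k 0 = if k = 0 then 1 else 0 := by
        intro k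
        by_cases hk : k = 0
        · subst hk; simp [hNdef, ha0]
        · have hk' : (k : ℕ) ≠ 0 := fun h => hk (Fin.ext h)
          simp [hNdef, hk, hk', ha0]
      have hdetN : N.det = (N.submatrix Fin.succ Fin.succ).det := by
        rw [Matrix.det_succ_column_zero, Finset.sum_eq_single (0 : Fin (q + 2))]
        · rw [hN0 0, if_pos rfl]
          simp [Fin.succAbove_zero]
        · intro k _ hk
          rw [hN0 k, if_neg hk]
          ring
        · intro h; exact absurd (Finset.mem_univ _) h
      -- expansion of the minor
      have ha1 : ∀ t : ℕ, t ≤ q → 1 ≤ a (t + 1) := by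
        intro t ht
        have := adj_smono ha (show 0 < t + 1 by omega) (by omega)
        omega
      set S : Fin (q + 1) → Finset ℕ := fun j => Finset.Ico (b (j : ℕ)) (b ((j : ℕ) + 1)) with hSdef
      set w : ℕ → Fin (q + 1) → ℚ := fun x i => ((x.choose (a ((i : ℕ) + 1) - 1)) : ℚ) with hwdef
      have hsubm : N.submatrix Fin.succ Fin.succ = Matrix.of (fun j => ∑ x ∈ S j, w x) := by
        ext j i
        simp only [Matrix.submatrix_apply, hNdef, Matrix.of_apply, Finset.sum_apply, Fin.val_succ,
          hSdef, hwdef]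
        rw [if_neg (by omega : ¬ (j : ℕ) + 1 = 0)]
        have h2 : a ((i : ℕ) + 1) = (a ((i : ℕ) + 1) - 1) + 1 := by
          have := ha1 (i : ℕ) (by omega)
          omega
        rw [show (j : ℕ) + 1 - 1 = (j : ℕ) from rfl, h2]
        exact choose_telescope _ (hb (j : ℕ) (by omega)).le
      have hdet_expand : (N.submatrix Fin.succ Fin.succ).det =
          ∑ r ∈ Fintype.piFinset S, Matrix.det (Matrix.of (fun j => w (r j))) := by
        rw [hsubm]
        exact (Matrix.detRowAlternating :
          (Fin (q + 1) → ℚ) [⋀^Fin (q + 1)]→ₗ[ℚ] ℚ).toMultilinearMap.map_sum_finset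
          (fun j x => w x) S
      -- identify terms with pm
      set ext : (Fin (q + 1) → ℕ) → ℕ → ℕ :=
        fun r t => if h : t < q + 1 then r ⟨t, h⟩ else 0 with hextdef
      have hterm_eq : ∀ r : Fin (q + 1) → ℕ,
          (Matrix.of (fun j => w (r j)) : Matrix (Fin (q+1)) (Fin (q+1)) ℚ) =
            pm q (fun t => a (t + 1) - 1) (ext r) := by
        intro r
        ext j i
        simp only [pm, Matrix.of_apply, hwdef, hextdef]
        rw [dif_pos j.isLt]
      have hIH : ∀ r ∈ Fintype.piFinset S,
          0 ≤ (pm q (fun t => a (t + 1) - 1) (ext r)).det ∧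
          ((∀ t ≤ q, a (t + 1) - 1 ≤ ext r t) →
            0 < (pm q (fun t => a (t + 1) - 1) (ext r)).det) := by
        intro r hr
        rw [Fintype.mem_piFinset] at hr
        have hrmem : ∀ j : Fin (q + 1), b (j : ℕ) ≤ r j ∧ r j < b ((j : ℕ) + 1) := by
          intro j
          have := hr j
          rw [hSdef, Finset.mem_Ico] at this
          exact this
        have hsum1 : ∑ t ∈ Finset.range (q + 1), ext r t = ∑ j : Fin (q + 1), r j := by
          rw [← Fin.sum_univ_eq_sum_range (fun t => ext r t) (q + 1)]
          exact Finset.sum_congr rfl fun j _ => by simp [hextdef, j.isLt]; intro h; have := j.isLt; omega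
        have hsum2 : (∑ j : Fin (q + 1), r j) + (q + 1) ≤ ∑ t ∈ Finset.range (q + 1 + 1), b t := by
          calc (∑ j : Fin (q + 1), r j) + (q + 1) = ∑ j : Fin (q + 1), (r j + 1) := by
                rw [Finset.sum_add_distrib, Finset.sum_const, Finset.card_univ, Fintype.card_fin,
                  smul_eq_mul, mul_one]
            _ ≤ ∑ j : Fin (q + 1), b ((j : ℕ) + 1) :=
                Finset.sum_le_sum fun j _ => by have := (hrmem j).2; omega
            _ = ∑ t ∈ Finset.range (q + 1), b (t + 1) :=
                Fin.sum_univ_eq_sum_range (fun t => b (t + 1)) (q + 1)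
            _ ≤ ∑ t ∈ Finset.range (q + 1 + 1), b t := by
                rw [Finset.sum_range_succ' b (q + 1)]
                omega
        refine ih (q + ∑ t ∈ Finset.range (q + 1), ext r t) (by omega) q _ _ le_rfl ?_ ?_
        · intro t ht
          have h1 := ha (t + 1) (by omega)
          have h2 := ha1 t (by omega)
          omega
        · intro t ht
          simp only [hextdef]
          rw [dif_pos (by omega : t < q + 1), dif_pos (by omega : t + 1 < q + 1)]
          have h1 := (hrmem ⟨t, by omega⟩).2
          have h2 := (hrmem ⟨t + 1, by omega⟩).1
          simp only at h1 h2
          omega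
      have hdet_eq : (pm (q + 1) a b).det =
          ∑ r ∈ Fintype.piFinset S, (pm q (fun t => a (t + 1) - 1) (ext r)).det := by
        rw [hLN, Matrix.det_mul, hdetL, one_mul, hdetN, hdet_expand]
        exact Finset.sum_congr rfl fun r _ => by rw [hterm_eq r]
      constructor
      · rw [hdet_eq]
        exact Finset.sum_nonneg fun r hr => (hIH r hr).1
      · intro hab
        set r₀ : Fin (q + 1) → ℕ := fun j => b ((j : ℕ) + 1) - 1 with hr₀def
        have hr₀ : r₀ ∈ Fintype.piFinset S := by
          rw [Fintype.mem_piFinset]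
          intro j
          have := hb (j : ℕ) (by omega)
          rw [hSdef, Finset.mem_Ico]
          constructor <;> simp only [hr₀def] <;> omega
        have hpos : 0 < (pm q (fun t => a (t + 1) - 1) (ext r₀)).det := by
          refine (hIH r₀ hr₀).2 ?_
          intro t ht
          simp only [hextdef, hr₀def]
          rw [dif_pos (by omega : t < q + 1)]
          have h1 := hab (t + 1) (by omega)
          have h2 := ha1 t ht
          omega
        rw [hdet_eq]
        exact lt_of_lt_of_le hpos
          (Finset.single_le_sum (fun r hr => (hIH r hr).1) hr₀)
  · by_cases hb0 : b 0 = 0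
    · have hz : (pm p a b).det = 0 := by
        refine Matrix.det_eq_zero_of_row_eq_zero 0 fun i => ?_
        show ((b ((0 : Fin (p + 1)) : ℕ)).choose (a (i : ℕ)) : ℚ) = 0
        have h1 : 1 ≤ a (i : ℕ) := by
          have := adj_mono ha (Nat.zero_le (i : ℕ)) (by omega : (i : ℕ) ≤ p)
          omega
        rw [show ((0 : Fin (p + 1)) : ℕ) = 0 from rfl, hb0,
          Nat.choose_eq_zero_of_lt (by omega)]
        norm_num
      refine ⟨by rw [hz], fun hab => ?_⟩
      have := hab 0 (by omega)
      omega
    · -- scaling case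
      have ha1 : ∀ i ≤ p, 1 ≤ a i := fun i hi =>
        le_trans (by omega) (adj_mono ha (Nat.zero_le i) hi)
      have hb1 : ∀ j ≤ p, 1 ≤ b j := fun j hj =>
        le_trans (by omega) (adj_mono hb (Nat.zero_le j) hj)
      set Inner : Matrix (Fin (p + 1)) (Fin (p + 1)) ℚ :=
        Matrix.of (fun j i => ((a (i : ℕ) : ℚ))⁻¹ *
          (((b (j : ℕ) - 1).choose (a (i : ℕ) - 1) : ℚ))) with hInner
      have hent : ∀ (j i : Fin (p + 1)),
          ((b (j : ℕ)).choose (a (i : ℕ)) : ℚ) = (b (j : ℕ) : ℚ) * Inner j i := by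
        intro j i
        obtain ⟨A1, hA⟩ : ∃ A1, a (i : ℕ) = A1 + 1 := ⟨a (i : ℕ) - 1, by
          have := ha1 (i : ℕ) (by omega); omega⟩
        obtain ⟨B1, hB⟩ : ∃ B1, b (j : ℕ) = B1 + 1 := ⟨b (j : ℕ) - 1, by
          have := hb1 (j : ℕ) (by omega); omega⟩
        simp only [hInner, Matrix.of_apply, hA, hB, Nat.add_sub_cancel]
        have hnat := Nat.add_one_mul_choose_eq B1 A1
        have hcast : ((B1 : ℚ) + 1) * ((B1.choose A1 : ℕ) : ℚ) =
            (((B1 + 1).choose (A1 + 1) : ℕ) : ℚ) * ((A1 : ℚ) + 1) := by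
          exact_mod_cast congrArg (fun x : ℕ => (x : ℚ)) hnat
        have hA1 : ((A1 : ℚ) + 1) ≠ 0 := by positivity
        field_simp
        push_cast
        linarith [hcast]
      have hdet : (pm p a b).det =
          (∏ j : Fin (p + 1), (b (j : ℕ) : ℚ)) *
            ((∏ i : Fin (p + 1), ((a (i : ℕ) : ℚ))⁻¹) *
              (pm p (fun t => a t - 1) (fun t => b t - 1)).det) := by
        calc (pm p a b).det
            = (Matrix.of (fun (j i : Fin (p + 1)) => (b (j : ℕ) : ℚ) * Inner j i)).det := by
              congr 1; ext j i; exact hent j i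
          _ = (∏ j : Fin (p + 1), (b (j : ℕ) : ℚ)) * Inner.det :=
              Matrix.det_mul_column (fun j : Fin (p + 1) => (b (j : ℕ) : ℚ)) Inner
          _ = _ := by
              congr 1
              have : Inner = Matrix.of (fun (j i : Fin (p + 1)) => ((a (i : ℕ) : ℚ))⁻¹ *
                  (pm p (fun t => a t - 1) (fun t => b t - 1)) j i) := rfl
              rw [this]
              exact Matrix.det_mul_row (fun i : Fin (p + 1) => ((a (i : ℕ) : ℚ))⁻¹)
                (pm p (fun t => a t - 1) (fun t => b t - 1))
      have hmeq : ∑ t ∈ Finset.range (p + 1), b t =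
          (∑ t ∈ Finset.range (p + 1), (b t - 1)) + (p + 1) := by
        have h1 : ∀ t ∈ Finset.range (p + 1), b t = (b t - 1) + 1 := fun t ht => by
          have := hb1 t (by rw [Finset.mem_range] at ht; omega)
          omega
        rw [Finset.sum_congr rfl h1, Finset.sum_add_distrib, Finset.sum_const,
          Finset.card_range, smul_eq_mul, mul_one]
      obtain ⟨h1, h2⟩ := ih (p + ∑ t ∈ Finset.range (p + 1), (b t - 1)) (by omega) p
        (fun t => a t - 1) (fun t => b t - 1) le_rfl
        (fun i hi => by
          have h1 := ha i hi; have h2 := ha1 i (le_of_lt hi)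
          show a i - 1 < a (i + 1) - 1
          omega)
        (fun j hj => by
          have h1 := hb j hj; have h2 := hb1 j (le_of_lt hj)
          show b j - 1 < b (j + 1) - 1
          omega)
      have hbpos : 0 < ∏ j : Fin (p + 1), (b (j : ℕ) : ℚ) :=
        Finset.prod_pos fun j _ => by
          have := hb1 (j : ℕ) (by omega)
          exact_mod_cast Nat.lt_of_lt_of_le Nat.zero_lt_one this
      have hapos : 0 < ∏ i : Fin (p + 1), ((a (i : ℕ) : ℚ))⁻¹ :=
        Finset.prod_pos fun i _ => by
          have := ha1 (i : ℕ) (by omega)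
          have : (0 : ℚ) < (a (i : ℕ) : ℚ) := by exact_mod_cast Nat.lt_of_lt_of_le Nat.zero_lt_one this
          positivity
      constructor
      · rw [hdet]
        exact mul_nonneg hbpos.le (mul_nonneg hapos.le h1)
      · intro hab
        rw [hdet]
        refine mul_pos hbpos (mul_pos hapos (h2 fun t ht => ?_))
        have := hab t ht
        omega

lemma rank_submatrix_id_le {s t u : ℕ} (Af : Matrix (Fin s) (Fin t) ℚ) (g : Fin u → Fin t) :
    (Af.submatrix id g).rank ≤ Af.rank := by
  rw [Matrix.rank, Matrix.rank]
  apply Submodule.finrank_mono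
  rintro x ⟨v, rfl⟩
  refine ⟨fun jc => ∑ j ∈ Finset.univ.filter (fun j => g j = jc), v j, ?_⟩
  ext i
  simp only [Matrix.mulVecLin_apply, Matrix.mulVec, dotProduct, Matrix.submatrix_apply,
    id_eq]
  calc ∑ jc, Af i jc * ∑ j ∈ Finset.univ.filter (fun j => g j = jc), v j
      = ∑ jc, ∑ j ∈ Finset.univ.filter (fun j => g j = jc), Af i (g j) * v j := by
        refine Finset.sum_congr rfl fun jc _ => ?_
        rw [Finset.mul_sum]
        refine Finset.sum_congr rfl fun j hj => ?_
        rw [Finset.mem_filter] at hj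
        rw [hj.2]
    _ = ∑ j, Af i (g j) * v j := Finset.sum_fiberwise _ _ _

end PascalAux

/-- If `{r ∘ α, c ∘ β}` is an ordered sub-pair of length `p + 1` for
`{[r 0, …, r m], [c 0, …, c n]}`, then the `(p+1) × (n+1)` Pascal submatrix
`T_{r̂,c}`, with `(i,j)` entry `C(c j, r (α i))`, has full row rank `p + 1`. -/
theorem pascal_orderedSubPair_full_row_rank
    (m n p : ℕ) (r c α β : ℕ → ℕ) (hr : StrictMono r) (hc : StrictMono c)
    (hsub : OrderedSubPair r c m n p α β) :
    (Matrix.of fun (i : Fin (p + 1)) (j : Fin (n + 1)) =>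
        ((c (j : ℕ)).choose (r (α (i : ℕ))) : ℚ)).rank = p + 1 := by
  obtain ⟨hα, hβ, hαm, hβn, hrc⟩ := hsub
  set Mf : Matrix (Fin (p + 1)) (Fin (n + 1)) ℚ :=
    Matrix.of fun (i : Fin (p + 1)) (j : Fin (n + 1)) =>
      ((c (j : ℕ)).choose (r (α (i : ℕ))) : ℚ) with hMf
  have hβmono : ∀ i ≤ p, β i ≤ β p := fun i hi =>
    hβ.monotoneOn (Set.mem_Iic.mpr hi) (Set.mem_Iic.mpr le_rfl) hi
  have hgdef : ∀ i : Fin (p + 1), β (i : ℕ) ≤ n := fun i =>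
    le_trans (hβmono (i : ℕ) (by omega)) hβn
  set g : Fin (p + 1) → Fin (n + 1) := fun i => ⟨β (i : ℕ), by have := hgdef i; omega⟩ with hg
  have hA : ∀ i < p, r (α i) < r (α (i + 1))  := fun i hi =>
    hr (hα (Set.mem_Iic.mpr (by omega)) (Set.mem_Iic.mpr (by omega)) (by omega))
  have hB : ∀ j < p, c (β j) < c (β (j + 1)) := fun j hj =>
    hc (hβ (Set.mem_Iic.mpr (by omega)) (Set.mem_Iic.mpr (by omega)) (by omega))
  have hkey := (PascalAux.key (p + ∑ j ∈ Finset.range (p + 1), c (β j)) p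
    (fun t => r (α t)) (fun t => c (β t)) le_rfl hA hB).2 (fun i hi => hrc i hi)
  have hQ : (Mf.submatrix id g).transpose = PascalAux.pm p (fun t => r (α t)) (fun t => c (β t)) := by
    ext j i
    simp [hMf, PascalAux.pm, hg, Matrix.transpose_apply]
  have hdetQ : (Mf.submatrix id g).det ≠ 0 := by
    rw [← Matrix.det_transpose, hQ]
    exact ne_of_gt hkey
  have hrankQ : (Mf.submatrix id g).rank = p + 1 := by
    rw [Matrix.rank_of_isUnit _ ((Matrix.isUnit_iff_isUnit_det _).mpr hdetQ.isUnit),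
      Fintype.card_fin]
  refine le_antisymm ?_ ?_
  · have := Mf.rank_le_card_height
    simpa using this
  · exact le_trans (le_of_eq hrankQ.symm) (PascalAux.rank_submatrix_id_le Mf g)
end

section
/- Let r = [r_0, ..., r_m] and c = [c_0, ..., c_n] be strictly increasing sequences of natural numbers, and let {r̂, ĉ} be an ordered sub-pair for {r, c} of length p+1. Then the (m+1)×(p+1) matrix T_{r,ĉ} with (i,j) entry C(ĉ_j, r_i) has full column rank, i.e., its rank equals p+1. -/
namespace PascalRankAux

/-- number of zeros plus number of adjacent sign changes of `f` on the window `[L, B]`. -/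
def cnt (f : ℕ → ℚ) (L B : ℕ) : ℕ :=
  ((Finset.Icc L B).filter fun x => f x = 0).card +
  ((Finset.Ico L B).filter fun x => f x * f (x + 1) < 0).card

/-- boundary correction term -/
def dlt (u v : ℚ) : ℕ := if u = 0 then 0 else if 0 < u * v then 0 else 1

lemma cnt_self (f : ℕ → ℚ) (L : ℕ) : cnt f L L = if f L = 0 then 1 else 0 := by
  simp only [cnt, Finset.Icc_self, Finset.Ico_self, Finset.filter_empty, Finset.card_empty,
    Finset.filter_singleton]
  split_ifs <;> simp

lemma cnt_empty (f : ℕ → ℚ) {L B : ℕ} (h : B < L) : cnt f L B = 0 := by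
  unfold cnt
  rw [Finset.Icc_eq_empty (by omega), Finset.Ico_eq_empty (by omega)]
  simp

lemma cnt_mono (f : ℕ → ℚ) {L B B' : ℕ} (h : B ≤ B') : cnt f L B ≤ cnt f L B' := by
  refine Nat.add_le_add ?_ ?_ <;>
  exact Finset.card_le_card (Finset.filter_subset_filter _ (by
    first
      | exact Finset.Icc_subset_Icc_right h
      | exact Finset.Ico_subset_Ico_right h))

lemma cnt_succ (f : ℕ → ℚ) (L t : ℕ) :
    cnt f L (L + t + 1) = cnt f L (L + t)
      + ((if f (L + t + 1) = 0 then 1 else 0)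
        + (if f (L + t) * f (L + t + 1) < 0 then 1 else 0)) := by
  have h1 : Finset.Icc L (L + t + 1) = insert (L + t + 1) (Finset.Icc L (L + t)) := by
    ext x; simp only [Finset.mem_Icc, Finset.mem_insert]; omega
  have h2 : Finset.Ico L (L + t + 1) = insert (L + t) (Finset.Ico L (L + t)) := by
    ext x; simp only [Finset.mem_Ico, Finset.mem_insert]; omega
  have c1 : ((Finset.Icc L (L + t + 1)).filter fun x => f x = 0).card
      = ((Finset.Icc L (L + t)).filter fun x => f x = 0).card
        + (if f (L + t + 1) = 0 then 1 else 0) := by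
    rw [h1, Finset.filter_insert]
    split_ifs
    · rw [Finset.card_insert_of_notMem (fun h => by
        have := (Finset.mem_filter.mp h).1
        simp only [Finset.mem_Icc] at this; omega)]
    · omega
  have c2 : ((Finset.Ico L (L + t + 1)).filter fun x => f x * f (x + 1) < 0).card
      = ((Finset.Ico L (L + t)).filter fun x => f x * f (x + 1) < 0).card
        + (if f (L + t) * f (L + t + 1) < 0 then 1 else 0) := by
    rw [h2, Finset.filter_insert]
    split_ifs
    · rw [Finset.card_insert_of_notMem (fun h => by
        have := (Finset.mem_filter.mp h).1
        simp only [Finset.mem_Ico] at this; omega)]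
    · omega
  unfold cnt
  omega

lemma cnt_left (f : ℕ → ℚ) {i B : ℕ} (h : i < B) :
    cnt f i B = ((if f i = 0 then 1 else 0) + (if f i * f (i + 1) < 0 then 1 else 0))
      + cnt f (i + 1) B := by
  have h1 : Finset.Icc i B = insert i (Finset.Icc (i + 1) B) := by
    ext x; simp only [Finset.mem_Icc, Finset.mem_insert]; omega
  have h2 : Finset.Ico i B = insert i (Finset.Ico (i + 1) B) := by
    ext x; simp only [Finset.mem_Ico, Finset.mem_insert]; omega
  have c1 : ((Finset.Icc i B).filter fun x => f x = 0).card
      = ((Finset.Icc (i + 1) B).filter fun x => f x = 0).card + (if f i = 0 then 1 else 0) := by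
    rw [h1, Finset.filter_insert]
    split_ifs
    · rw [Finset.card_insert_of_notMem (fun h => by
        have := (Finset.mem_filter.mp h).1
        simp only [Finset.mem_Icc] at this; omega)]
    · omega
  have c2 : ((Finset.Ico i B).filter fun x => f x * f (x + 1) < 0).card
      = ((Finset.Ico (i + 1) B).filter fun x => f x * f (x + 1) < 0).card
        + (if f i * f (i + 1) < 0 then 1 else 0) := by
    rw [h2, Finset.filter_insert]
    split_ifs
    · rw [Finset.card_insert_of_notMem (fun h => by
        have := (Finset.mem_filter.mp h).1
        simp only [Finset.mem_Ico] at this; omega)]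
    · omega
  unfold cnt
  omega

/-- The key finite sign check. -/
lemma key (a b u : ℚ) :
    ((if b = 0 then 1 else 0) + (if a * b < 0 then 1 else 0)) + dlt b (b - a)
      ≤ ((if b - a = 0 then 1 else 0) + (if u * (b - a) < 0 then 1 else 0)) + dlt a u := by
  have hd : ∀ x y : ℚ, dlt x y ≤ 1 := by intro x y; unfold dlt; split_ifs <;> omega
  by_cases hb : b = 0
  · have h1 : dlt b (b - a) = 0 := by unfold dlt; rw [if_pos hb]
    have h2 : ¬ a * b < 0 := by rw [hb, mul_zero]; exact lt_irrefl 0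
    rw [if_pos hb, if_neg h2, h1]
    by_cases ha : a = 0
    · have h3 : b - a = 0 := by rw [hb, ha]; ring
      rw [if_pos h3]
      have := hd a u; omega
    · by_cases hau : 0 < a * u
      · have hu : u * (b - a) < 0 := by
          have ha2 : 0 < a * a := mul_self_pos.mpr ha
          rw [hb]; nlinarith
        rw [if_pos hu]
        have := hd a u; omega
      · have h4 : dlt a u = 1 := by unfold dlt; rw [if_neg ha, if_neg hau]
        rw [h4]; omega
  · by_cases hba : b - a = 0
    · have hab : b = a := sub_eq_zero.mp hba
      have h2 : ¬ a * b < 0 := by rw [hab]; nlinarith [mul_self_nonneg a]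
      rw [if_pos hba, if_neg h2, if_neg hb]
      have := hd b (b - a); have := hd a u; omega
    · by_cases ha : a = 0
      · have hbb : 0 < b * (b - a) := by rw [ha, sub_zero]; exact mul_self_pos.mpr hb
        have h1 : dlt b (b - a) = 0 := by unfold dlt; rw [if_neg hb, if_pos hbb]
        have h2 : ¬ a * b < 0 := by rw [ha, zero_mul]; exact lt_irrefl 0
        rw [if_neg hb, if_neg h2, h1]
        have := hd a u; omega
      · by_cases hau : 0 < a * u
        · have hdau : dlt a u = 0 := by unfold dlt; rw [if_neg ha, if_pos hau]
          by_cases hab : a * b < 0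
          · have hbb : 0 < b * (b - a) := by nlinarith [mul_self_pos.mpr hb]
            have h1 : dlt b (b - a) = 0 := by unfold dlt; rw [if_neg hb, if_pos hbb]
            have hu : u * (b - a) < 0 := by nlinarith [mul_self_pos.mpr ha]
            rw [if_neg hb, if_pos hab, h1, if_neg hba, if_pos hu, hdau]
          · have hab' : 0 < a * b :=
              (not_lt.mp hab).lt_of_ne (Ne.symm (mul_ne_zero ha hb))
            by_cases hbb : 0 < b * (b - a)
            · have h1 : dlt b (b - a) = 0 := by unfold dlt; rw [if_neg hb, if_pos hbb]
              rw [if_neg hb, if_neg hab, h1, hdau]; omega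
            · have h1 : dlt b (b - a) = 1 := by unfold dlt; rw [if_neg hb, if_neg hbb]
              have hu0 : u ≠ 0 := by intro h; rw [h, mul_zero] at hau; exact lt_irrefl 0 hau
              have h2 : u * (b - a) ≤ 0 := by nlinarith [not_lt.mp hbb]
              have hu : u * (b - a) < 0 := h2.lt_of_ne (mul_ne_zero hu0 hba)
              rw [if_neg hb, if_neg hab, h1, if_pos hu, hdau]; omega
        · have hdau : dlt a u = 1 := by unfold dlt; rw [if_neg ha, if_neg hau]
          by_cases hab : a * b < 0
          · have hbb : 0 < b * (b - a) := by nlinarith [mul_self_pos.mpr hb]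
            have h1 : dlt b (b - a) = 0 := by unfold dlt; rw [if_neg hb, if_pos hbb]
            rw [if_neg hb, if_pos hab, h1, hdau]; omega
          · rw [if_neg hb, if_neg hab]
            have := hd b (b - a); omega

/-- Discrete Rolle / Budan-Fourier style inequality. -/
lemma lemD (f : ℕ → ℚ) (L : ℕ) :
    ∀ t, cnt f L (L + t) ≤ cnt (fun x => f (x + 1) - f x) L (L + t) + 1 := by
  set g : ℕ → ℚ := fun x => f (x + 1) - f x with hg
  have main : ∀ t, cnt f L (L + t + 1) + dlt (f (L + t + 1)) (g (L + t))
      ≤ cnt g L (L + t) + 1 := by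
    intro t
    induction t with
    | zero =>
      show cnt f L (L + 1) + dlt (f (L + 1)) (g L) ≤ cnt g L L + 1
      have h1 : cnt f L (L + 1)
          = cnt f L L + ((if f (L + 1) = 0 then 1 else 0)
            + (if f L * f (L + 1) < 0 then 1 else 0)) := cnt_succ f L 0
      have h2 := cnt_self f L
      have h3 := cnt_self g L
      have hkey := key (f L) (f (L + 1)) 0
      simp only [zero_mul, lt_self_iff_false, if_false] at hkey
      have hgL : g L = f (L + 1) - f L := rfl
      have hda : dlt (f L) 0 + (if f L = 0 then 1 else 0) ≤ 1 := by
        unfold dlt; split_ifs <;> omega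
      rw [hgL] at h3 ⊢
      omega
    | succ t ih =>
      show cnt f L (L + t + 1 + 1) + dlt (f (L + t + 1 + 1)) (g (L + t + 1))
        ≤ cnt g L (L + t + 1) + 1
      have h1 : cnt f L (L + t + 1 + 1)
          = cnt f L (L + t + 1) + ((if f (L + t + 1 + 1) = 0 then 1 else 0)
            + (if f (L + t + 1) * f (L + t + 1 + 1) < 0 then 1 else 0)) := cnt_succ f L (t + 1)
      have h2 := cnt_succ g L t
      have hkey := key (f (L + t + 1)) (f (L + t + 2)) (g (L + t))
      have hgt : g (L + t + 1) = f (L + t + 2) - f (L + t + 1) := rfl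
      have h12 : L + t + 1 + 1 = L + t + 2 := rfl
      rw [hgt, h12] at h2 ⊢ <;> try rw [h12] at h1
      rw [h12] at h1
      omega
  intro t
  cases t with
  | zero =>
    show cnt f L L ≤ cnt g L L + 1
    have h2 := cnt_self f L
    split_ifs at h2 <;> omega
  | succ t =>
    show cnt f L (L + t + 1) ≤ cnt g L (L + t + 1) + 1
    have h1 := main t
    have h2 : cnt g L (L + t) ≤ cnt g L (L + t + 1) := cnt_mono g (by omega)
    omega

/-- Main counting claim: a nonzero combination of `|K|` binomial-coefficient columns has
fewer than `|K|` zeros-or-sign-changes to the right of `min K`. -/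
lemma claim : ∀ (N : ℕ) (K : Finset ℕ) (hK : K.Nonempty) (ν : ℕ → ℚ),
    (∑ k ∈ K, (k + 1)) ≤ N → (∀ k ∈ K, ν k ≠ 0) → ∀ B,
    cnt (fun x => ∑ k ∈ K, ν k * (x.choose k : ℚ)) (K.min' hK) B + 1 ≤ K.card := by
  intro N
  induction N using Nat.strong_induction_on with
  | _ N IH =>
  intro K hK ν hsum hν B
  set R : ℕ → ℚ := fun x => ∑ k ∈ K, ν k * (x.choose k : ℚ) with hR
  set m0 := K.min' hK with hm0
  have hm0K : m0 ∈ K := K.min'_mem hK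
  by_cases hcard : K.card = 1
  · -- base case : single binomial column
    obtain ⟨k0, hk0⟩ := Finset.card_eq_one.mp hcard
    have hm0k0 : m0 = k0 := by
      have h1 := hm0K
      rw [hk0] at h1
      exact Finset.mem_singleton.mp h1
    have hRx : ∀ x, R x = ν k0 * (x.choose k0 : ℚ) := by
      intro x; simp only [hR, hk0, Finset.sum_singleton]
    have hν0 : ν k0 ≠ 0 := hν k0 (by rw [hk0]; exact Finset.mem_singleton_self k0)
    have hpos : ∀ x, m0 ≤ x → R x ≠ 0 := by
      intro x hx
      rw [hRx]
      exact mul_ne_zero hν0 (by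
        have := Nat.choose_pos (by omega : k0 ≤ x)
        positivity)
    have hz : ((Finset.Icc m0 B).filter fun x => R x = 0).card = 0 := by
      rw [Finset.card_eq_zero, Finset.filter_eq_empty_iff]
      intro x hx
      exact hpos x (Finset.mem_Icc.mp hx).1
    have hs : ((Finset.Ico m0 B).filter fun x => R x * R (x + 1) < 0).card = 0 := by
      rw [Finset.card_eq_zero, Finset.filter_eq_empty_iff]
      intro x hx
      have hx1 := (Finset.mem_Ico.mp hx).1
      have c1 : (0:ℚ) < (x.choose k0 : ℚ) := by
        have := Nat.choose_pos (by omega : k0 ≤ x); positivity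
      have c2 : (0:ℚ) < ((x+1).choose k0 : ℚ) := by
        have := Nat.choose_pos (by omega : k0 ≤ x + 1); positivity
      have : R x * R (x + 1) = (ν k0 * ν k0) * ((x.choose k0 : ℚ) * ((x+1).choose k0 : ℚ)) := by
        rw [hRx, hRx]; ring
      rw [this]
      exact not_lt.mpr (le_of_lt (mul_pos (mul_self_pos.mpr hν0) (mul_pos c1 c2)))
    have : cnt R m0 B = 0 := by unfold cnt; omega
    omega
  · -- inductive step
    have hcard1 : 1 ≤ K.card := Finset.card_pos.mpr hK
    -- the difference data
    set K' : Finset ℕ := (K.erase 0).image (fun k => k - 1) with hK'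
    set ν' : ℕ → ℚ := fun j => ν (j + 1) with hν'
    have hinj : Set.InjOn (fun k => k - 1) (K.erase 0) := by
      intro x hx y hy hxy
      have hx0 : x ≠ 0 := (Finset.mem_erase.mp hx).1
      have hy0 : y ≠ 0 := (Finset.mem_erase.mp hy).1
      simp only at hxy; omega
    have hΔ : ∀ x, R (x + 1) - R x = ∑ j ∈ K', ν' j * (x.choose j : ℚ) := by
      intro x
      rw [hK', Finset.sum_image hinj]
      rw [hR]
      rw [← Finset.sum_sub_distrib]
      rw [← Finset.sum_erase (s := K) (a := 0) (by simp)]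
      apply Finset.sum_congr rfl
      intro k hk
      have hk0 : k ≠ 0 := (Finset.mem_erase.mp hk).1
      obtain ⟨j, rfl⟩ : ∃ j, k = j + 1 := ⟨k - 1, by omega⟩
      have hch : (x + 1).choose (j + 1) = x.choose j + x.choose (j + 1) :=
        Nat.choose_succ_succ' x j
      simp only [hν', Nat.add_sub_cancel]
      rw [hch]
      push_cast
      ring
    have hν'K' : ∀ j ∈ K', ν' j ≠ 0 := by
      intro j hj
      obtain ⟨k, hk, hkj⟩ := Finset.mem_image.mp hj
      have hk0 : k ≠ 0 := (Finset.mem_erase.mp hk).1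
      show ν (j + 1) ≠ 0
      rw [show j + 1 = k by omega]
      exact hν k (Finset.mem_of_mem_erase hk)
    have hΔfun : (fun x => R (x + 1) - R x) = (fun x => ∑ j ∈ K', ν' j * (x.choose j : ℚ)) :=
      funext hΔ
    cases hm : m0 with
    | succ m1 =>
      -- min is positive : shift down
      have h0K : 0 ∉ K := fun h => by have := K.min'_le 0 h; omega
      have hKe : K.erase 0 = K := Finset.erase_eq_of_notMem h0K
      have hK'ne : K'.Nonempty := by
        rw [hK', hKe]; exact hK.image _
      have hcard' : K'.card = K.card := by
        rw [hK', hKe, Finset.card_image_of_injOn (by rw [← hKe]; exact hinj)]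
      have hmin' : K'.min' hK'ne = m1 := by
        apply le_antisymm
        · apply Finset.min'_le
          rw [hK', hKe]
          exact Finset.mem_image.mpr ⟨m0, hm0K, by omega⟩
        · apply Finset.le_min'
          intro j hj
          rw [hK', hKe] at hj
          obtain ⟨k, hk, hkj⟩ := Finset.mem_image.mp hj
          have := K.min'_le k hk
          omega
      have hsumK : (∑ k ∈ K, (k + 1)) = (∑ k ∈ K, k) + K.card := by
        rw [Finset.sum_add_distrib, Finset.sum_const, smul_eq_mul, mul_one]
      have hsum' : (∑ j ∈ K', (j + 1)) = ∑ k ∈ K, k := by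
        rw [hK', hKe, Finset.sum_image (by rw [← hKe]; exact hinj)]
        apply Finset.sum_congr rfl
        intro k hk
        have := K.min'_le k hk
        omega
      have hlt : (∑ j ∈ K', (j + 1)) < N := by omega
      have hIH := IH _ hlt K' hK'ne ν' le_rfl hν'K'
      by_cases hB : B < m0
      · rw [hm] at hB
        have h0 : cnt R (m1 + 1) B = 0 := cnt_empty R hB
        omega
      · push_neg at hB
        obtain ⟨t, rfl⟩ : ∃ t, B = m1 + t := ⟨B - m1, by omega⟩
        have hlemD := lemD R m1 t
        rw [hΔfun] at hlemD
        have hIHt := hIH (m1 + t)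
        rw [hmin'] at hIHt
        have hRm1 : R m1 = 0 := by
          show (∑ k ∈ K, ν k * ((m1).choose k : ℚ)) = 0
          apply Finset.sum_eq_zero
          intro k hk
          have h1 := K.min'_le k hk
          rw [Nat.choose_eq_zero_of_lt (by omega : m1 < k)]
          simp
        have hleft : cnt R m1 (m1 + t) = 1 + cnt R (m1 + 1) (m1 + t) := by
          rw [cnt_left R (show m1 < m1 + t by omega)]
          rw [hRm1, if_pos rfl, if_neg (by rw [zero_mul]; exact lt_irrefl 0)]
        omega
    | zero =>
      -- min is zero
      have h0K : 0 ∈ K := by rw [← hm]; exact hm0K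
      have hcard2 : 2 ≤ K.card := by omega
      have hene : (K.erase 0).Nonempty := by
        rw [← Finset.card_pos, Finset.card_erase_of_mem h0K]; omega
      set k1 := (K.erase 0).min' hene with hk1def
      have hk1e : k1 ∈ K.erase 0 := Finset.min'_mem _ hene
      have hk1K : k1 ∈ K := Finset.mem_of_mem_erase hk1e
      have hk10 : k1 ≠ 0 := (Finset.mem_erase.mp hk1e).1
      obtain ⟨m1, hm1⟩ : ∃ m1, k1 = m1 + 1 := ⟨k1 - 1, by omega⟩
      have hK'ne : K'.Nonempty := by rw [hK']; exact hene.image _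
      have hcard' : K'.card = K.card - 1 := by
        rw [hK', Finset.card_image_of_injOn hinj, Finset.card_erase_of_mem h0K]
      have hmin' : K'.min' hK'ne = m1 := by
        apply le_antisymm
        · apply Finset.min'_le
          rw [hK']
          exact Finset.mem_image.mpr ⟨k1, hk1e, by omega⟩
        · apply Finset.le_min'
          intro j hj
          rw [hK'] at hj
          obtain ⟨k, hk, hkj⟩ := Finset.mem_image.mp hj
          have := (K.erase 0).min'_le k hk
          omega
      have hsumsplit : (∑ k ∈ K.erase 0, (k + 1)) + (0 + 1) = ∑ k ∈ K, (k + 1) :=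
        Finset.sum_erase_add K _ h0K
      have hsum'le : (∑ j ∈ K', (j + 1)) ≤ ∑ k ∈ K.erase 0, (k + 1) := by
        rw [hK', Finset.sum_image hinj]
        apply Finset.sum_le_sum
        intro k hk
        omega
      have hlt : (∑ j ∈ K', (j + 1)) < N := by omega
      have hIH := IH _ hlt K' hK'ne ν' le_rfl hν'K'
      have hν0 : ν 0 ≠ 0 := hν 0 h0K
      have hconst : ∀ x, x ≤ m1 → R x = ν 0 := by
        intro x hx
        show (∑ k ∈ K, ν k * ((x).choose k : ℚ)) = ν 0
        rw [Finset.sum_eq_single_of_mem 0 h0K (by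
          intro k hk hk0
          have h1 : k ∈ K.erase 0 := Finset.mem_erase.mpr ⟨hk0, hk⟩
          have h2 := (K.erase 0).min'_le k h1
          rw [Nat.choose_eq_zero_of_lt (by omega : x < k)]
          simp)]
        simp
      by_cases hB : B ≤ m1
      · have hz : ((Finset.Icc 0 B).filter fun x => R x = 0).card = 0 := by
          rw [Finset.card_eq_zero, Finset.filter_eq_empty_iff]
          intro x hx
          rw [hconst x (by have := (Finset.mem_Icc.mp hx).2; omega)]
          exact hν0
        have hs : ((Finset.Ico 0 B).filter fun x => R x * R (x + 1) < 0).card = 0 := by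
          rw [Finset.card_eq_zero, Finset.filter_eq_empty_iff]
          intro x hx
          have hx2 := (Finset.mem_Ico.mp hx).2
          rw [hconst x (by omega), hconst (x + 1) (by omega)]
          exact not_lt.mpr (le_of_lt (mul_self_pos.mpr hν0))
        have : cnt R 0 B = 0 := by unfold cnt; omega
        omega
      · push_neg at hB
        have hpre : ∀ d i, i + d = m1 → cnt R i B = cnt R m1 B := by
          intro d
          induction d with
          | zero => intro i h; rw [show i = m1 by omega]
          | succ d hd =>
            intro i h
            rw [cnt_left R (show i < B by omega)]
            rw [hconst i (by omega), hconst (i + 1) (by omega)]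
            rw [if_neg hν0, if_neg (not_lt.mpr (le_of_lt (mul_self_pos.mpr hν0)))]
            have := hd (i + 1) (by omega)
            omega
        have h0B : cnt R 0 B = cnt R m1 B := hpre m1 0 (by omega)
        obtain ⟨t, rfl⟩ : ∃ t, B = m1 + t := ⟨B - m1, by omega⟩
        have hlemD := lemD R m1 t
        rw [hΔfun] at hlemD
        have hIHt := hIH (m1 + t)
        rw [hmin'] at hIHt
        omega

/-- A nonzero rational combination of binomial columns `C(·, k), k ∈ K` has fewer than
`|K|` integer zeros that are `≥ min K`. -/
lemma zeros (K : Finset ℕ) (hK : K.Nonempty) (ν : ℕ → ℚ) (hν : ∀ k ∈ K, ν k ≠ 0)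
    (Y : Finset ℕ) (hmin : ∀ y ∈ Y, K.min' hK ≤ y)
    (hz : ∀ y ∈ Y, (∑ k ∈ K, ν k * (y.choose k : ℚ)) = 0) : Y.card < K.card := by
  rcases Y.eq_empty_or_nonempty with hY | hY
  · rw [hY]
    simpa using Finset.card_pos.mpr hK
  · set B := Y.max' hY with hB
    have hsub : Y ⊆ (Finset.Icc (K.min' hK) B).filter
        (fun x => (∑ k ∈ K, ν k * (x.choose k : ℚ)) = 0) := by
      intro y hy
      rw [Finset.mem_filter, Finset.mem_Icc]
      exact ⟨⟨hmin y hy, Y.le_max' y hy⟩, hz y hy⟩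
    have h1 : Y.card ≤ cnt (fun x => ∑ k ∈ K, ν k * (x.choose k : ℚ)) (K.min' hK) B := by
      refine le_trans (Finset.card_le_card hsub) ?_
      exact Nat.le_add_right _ _
    have h2 := claim (∑ k ∈ K, (k + 1)) K hK ν le_rfl hν B
    omega

/-- The square Pascal-type matrix with strictly increasing rows `a`, columns `b`,
and `a i ≤ b i`, has nonzero determinant. -/
lemma det_ne_zero (s : ℕ) (a b : Fin (s + 1) → ℕ) (ha : StrictMono a) (hb : StrictMono b)
    (hab : ∀ i, a i ≤ b i) :
    (Matrix.of fun j i : Fin (s + 1) => ((b j).choose (a i) : ℚ)).det ≠ 0 := by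
  classical
  intro hdet
  obtain ⟨μ, hμ0, hμ⟩ := Matrix.exists_mulVec_eq_zero_iff.mpr hdet
  set supp := Finset.univ.filter (fun i : Fin (s + 1) => μ i ≠ 0) with hsuppdef
  have hsupp : supp.Nonempty := by
    obtain ⟨i, hi⟩ := Function.ne_iff.mp hμ0
    exact ⟨i, by simp [hsuppdef]; exact hi⟩
  set i0 := supp.min' hsupp with hi0
  have hi0supp : i0 ∈ supp := supp.min'_mem hsupp
  set K := supp.image a with hKdef
  have hKne : K.Nonempty := hsupp.image a
  set ν : ℕ → ℚ := fun k => ∑ i ∈ Finset.univ.filter (fun i => a i = k), μ i with hνdef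
  have hfib : ∀ i : Fin (s + 1), Finset.univ.filter (fun i' => a i' = a i) = {i} := by
    intro i
    ext i'
    simp only [Finset.mem_filter, Finset.mem_univ, true_and, Finset.mem_singleton]
    exact ⟨fun h => ha.injective h, fun h => by rw [h]⟩
  have hνa : ∀ i, ν (a i) = μ i := by
    intro i
    rw [hνdef]
    simp only
    rw [hfib i, Finset.sum_singleton]
  have hνK : ∀ k ∈ K, ν k ≠ 0 := by
    intro k hk
    obtain ⟨i, hi, rfl⟩ := Finset.mem_image.mp hk
    rw [hνa]
    exact (Finset.mem_filter.mp hi).2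
  have hminK : K.min' hKne = a i0 := by
    apply le_antisymm
    · exact K.min'_le _ (Finset.mem_image_of_mem a hi0supp)
    · apply Finset.le_min'
      intro k hk
      obtain ⟨i, hi, rfl⟩ := Finset.mem_image.mp hk
      exact ha.monotone (supp.min'_le i hi)
  have hRb : ∀ j : Fin (s + 1), (∑ k ∈ K, ν k * ((b j).choose k : ℚ)) = 0 := by
    intro j
    rw [hKdef, Finset.sum_image (ha.injective.injOn)]
    have h1 : ∀ i ∈ supp, ν (a i) * ((b j).choose (a i) : ℚ)
        = μ i * ((b j).choose (a i) : ℚ) := by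
      intro i _
      rw [hνa]
    rw [Finset.sum_congr rfl h1]
    have h2 : (∑ i ∈ supp, μ i * ((b j).choose (a i) : ℚ))
        = ∑ i : Fin (s + 1), μ i * ((b j).choose (a i) : ℚ) := by
      apply Finset.sum_subset (Finset.subset_univ supp)
      intro i _ hi
      have : μ i = 0 := by
        by_contra h
        exact hi (Finset.mem_filter.mpr ⟨Finset.mem_univ i, h⟩)
      rw [this, zero_mul]
    rw [h2]
    have h3 := congrFun hμ j
    simp only [Matrix.mulVec, dotProduct, Matrix.of_apply, Pi.zero_apply] at h3
    rw [← h3]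
    apply Finset.sum_congr rfl
    intro i _
    ring
  set Jset := Finset.univ.filter (fun j : Fin (s + 1) => i0 ≤ j) with hJdef
  set Y := Jset.image b with hYdef
  have hYcard : Y.card = Jset.card := Finset.card_image_of_injOn (hb.injective.injOn)
  have hKcard : K.card = supp.card := Finset.card_image_of_injOn (ha.injective.injOn)
  have hsubJ : supp ⊆ Jset := by
    intro i hi
    rw [hJdef, Finset.mem_filter]
    exact ⟨Finset.mem_univ i, supp.min'_le i hi⟩
  have hlt : Y.card < K.card := by
    apply zeros K hKne ν hνK Y
    · intro y hy
      obtain ⟨j, hj, rfl⟩ := Finset.mem_image.mp hy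
      have hij : i0 ≤ j := (Finset.mem_filter.mp hj).2
      rw [hminK]
      exact le_trans (ha.monotone hij) (hab j)
    · intro y hy
      obtain ⟨j, _, rfl⟩ := Finset.mem_image.mp hy
      exact hRb j
  have := Finset.card_le_card hsubJ
  omega

end PascalRankAux

/-- If `{r ∘ α, c ∘ β}` is an ordered sub-pair of length `p + 1` for
`{[r 0, …, r m], [c 0, …, c n]}`, then the `(m+1) × (p+1)` Pascal submatrix
`T_{r,ĉ}`, with `(i,j)` entry `C(c (β j), r i)`, has full column rank `p + 1`. -/
theorem pascal_orderedSubPair_full_column_rank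
    (m n p : ℕ) (r c α β : ℕ → ℕ) (hr : StrictMono r) (hc : StrictMono c)
    (hsub : OrderedSubPair r c m n p α β) :
    (Matrix.of fun (i : Fin (m + 1)) (j : Fin (p + 1)) =>
        ((c (β (j : ℕ))).choose (r (i : ℕ)) : ℚ)).rank = p + 1 := by
  classical
  obtain ⟨hα, hβ, hαm, hβn, hrc⟩ := hsub
  set M : Matrix (Fin (m + 1)) (Fin (p + 1)) ℚ :=
    Matrix.of fun (i : Fin (m + 1)) (j : Fin (p + 1)) =>
      ((c (β (j : ℕ))).choose (r (i : ℕ)) : ℚ) with hM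
  set a : Fin (p + 1) → ℕ := fun k => r (α (k : ℕ)) with hadef
  set b : Fin (p + 1) → ℕ := fun j => c (β (j : ℕ)) with hbdef
  have ha : StrictMono a := by
    intro k l hkl
    exact hr (hα (Set.mem_Iic.mpr (Fin.is_le k)) (Set.mem_Iic.mpr (Fin.is_le l)) hkl)
  have hb : StrictMono b := by
    intro k l hkl
    exact hc (hβ (Set.mem_Iic.mpr (Fin.is_le k)) (Set.mem_Iic.mpr (Fin.is_le l)) hkl)
  have hab : ∀ i : Fin (p + 1), a i ≤ b i := fun i => hrc (i : ℕ) (Fin.is_le i)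
  have hdet := PascalRankAux.det_ne_zero p a b ha hb hab
  set S : Matrix (Fin (p + 1)) (Fin (p + 1)) ℚ :=
    Matrix.of fun j i : Fin (p + 1) => ((b j).choose (a i) : ℚ) with hS
  -- the row-selection map
  have hαle : ∀ k : Fin (p + 1), α (k : ℕ) ≤ m := by
    intro k
    rcases eq_or_lt_of_le (Fin.is_le k) with h | h
    · rw [h]; exact hαm
    · exact le_trans (le_of_lt (hα (Set.mem_Iic.mpr (Fin.is_le k))
        (Set.mem_Iic.mpr le_rfl) h)) hαm
  set ρ : Fin (p + 1) → Fin (m + 1) := fun k => ⟨α (k : ℕ), Nat.lt_succ_of_le (hαle k)⟩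
  have hMT : LinearIndependent ℚ M.transpose.row := by
    rw [Fintype.linearIndependent_iff]
    intro g hg
    have hvS : Matrix.vecMul g S = 0 := by
      funext k
      have hk := congrFun hg (ρ k)
      simp only [Finset.sum_apply, Pi.smul_apply, smul_eq_mul, Matrix.transpose_apply,
        Pi.zero_apply] at hk
      simp only [Matrix.vecMul, dotProduct, Pi.zero_apply]
      rw [← hk]
      apply Finset.sum_congr rfl
      intro j _
      simp only [hS, hM, Matrix.of_apply, Matrix.row, Matrix.transpose_apply]
      rfl
    intro i
    by_contra hgi
    exact hdet (Matrix.exists_vecMul_eq_zero_iff.mp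
      ⟨g, fun h => hgi (congrFun h i), hvS⟩)
  have h1 : M.transpose.rank = p + 1 := by
    rw [hMT.rank_matrix, Fintype.card_fin]
  rw [← Matrix.rank_transpose, h1]
end

section
/- Let r = [r_0, ..., r_m] and c = [c_0, ..., c_n] be strictly increasing sequences of natural numbers. If {r, c} admits an ordered sub-pair of length p+1, then the rank of the matrix T_{r,c} with (i,j) entry C(c_j, r_i) is at least p+1. -/
open Matrix Finset

namespace PascalAux

def pmat {N : ℕ} (r c : Fin N → ℕ) : Matrix (Fin N) (Fin N) ℚ :=
  Matrix.of fun i j => ((c j).choose (r i) : ℚ)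

lemma det_eq_zero_of_bad {N : ℕ} (r c : Fin N → ℕ) (hr : Monotone r) (hc : Monotone c)
    (i : Fin N) (hi : c i < r i) : (pmat r c).det = 0 := by
  rw [Matrix.det_apply]
  refine Finset.sum_eq_zero fun σ _ => ?_
  have : ∃ j, j ≤ i ∧ i ≤ σ j := by
    by_contra h
    push_neg at h
    have hmap : ∀ j ∈ Finset.Iic i, σ j ∈ Finset.Iio i := by
      intro j hj
      simp only [Finset.mem_Iic] at hj
      simpa [Finset.mem_Iio] using h j hj
    have hcard : (Finset.Iio i).card < (Finset.Iic i).card := by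
      simp [Fin.card_Iio, Fin.card_Iic]
    obtain ⟨x, hx, y, hy, hxy, hfxy⟩ :=
      Finset.exists_ne_map_eq_of_card_lt_of_maps_to hcard hmap
    exact hxy (σ.injective hfxy)
  obtain ⟨j, hj, hij⟩ := this
  have hz : pmat r c (σ j) j = 0 := by
    have : c j < r (σ j) := lt_of_le_of_lt (hc hj) (lt_of_lt_of_le hi (hr hij))
    simp [pmat, Nat.choose_eq_zero_of_lt this]
  have : (∏ i : Fin N, pmat r c (σ i) i) = 0 := Finset.prod_eq_zero (Finset.mem_univ j) hz
  rw [this, smul_zero]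

lemma sum_range_choose_q (k b : ℕ) :
    ∑ d ∈ Finset.range b, ((d.choose k : ℚ)) = (b.choose (k + 1) : ℚ) := by
  induction b with
  | zero => simp
  | succ b ih =>
    rw [Finset.sum_range_succ, ih, Nat.choose_succ_succ b k]
    push_cast
    ring

lemma sum_Ico_choose_q (k a b : ℕ) (h : a ≤ b) :
    ∑ d ∈ Finset.Ico a b, ((d.choose k : ℚ)) =
      (b.choose (k + 1) : ℚ) - (a.choose (k + 1) : ℚ) := by
  rw [Finset.sum_Ico_eq_sub _ h, sum_range_choose_q, sum_range_choose_q]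

lemma det_scale {N : ℕ} (r c : Fin N → ℕ) (hr1 : ∀ i, 1 ≤ r i) (hc1 : ∀ j, 1 ≤ c j) :
    (∏ i, (r i : ℚ)) * (pmat r c).det =
      (∏ j, (c j : ℚ)) * (pmat (fun i => r i - 1) (fun j => c j - 1)).det := by
  have key : (Matrix.of fun i j => (r i : ℚ) * pmat r c i j) =
      (Matrix.of fun i j => (c j : ℚ) * pmat (fun i => r i - 1) (fun j => c j - 1) i j) := by
    ext i j
    simp only [Matrix.of_apply, pmat]
    have h1 : (c j - 1).succ * (c j - 1).choose (r i - 1) =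
        ((c j - 1).succ).choose ((r i - 1).succ) * (r i - 1).succ :=
      Nat.add_one_mul_choose_eq (c j - 1) (r i - 1)
    have hc' : (c j - 1).succ = c j := Nat.succ_pred_eq_of_pos (hc1 j)
    have hr' : (r i - 1).succ = r i := Nat.succ_pred_eq_of_pos (hr1 i)
    rw [hc', hr'] at h1
    rw [mul_comm ((r i : ℚ))]
    exact_mod_cast h1.symm
  have h2 := Matrix.det_mul_column (fun i => (r i : ℚ)) (pmat r c)
  have h3 := Matrix.det_mul_row (fun j => (c j : ℚ))
      (pmat (fun i => r i - 1) (fun j => c j - 1))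
  rw [← h2, ← h3, key]

lemma det_pos (N : ℕ) : ∀ (r c : Fin (N + 1) → ℕ), StrictMono r → StrictMono c →
    (∀ i, r i ≤ c i) → 0 < (pmat r c).det := by
  induction N using Nat.strong_induction_on with
  | _ N IH =>
  cases N with
  | zero =>
    intro r c hr hc hrc
    have : (pmat r c).det = ((c 0).choose (r 0) : ℚ) := by
      rw [Matrix.det_fin_one]; rfl
    rw [this]
    exact_mod_cast Nat.choose_pos (hrc 0)
  | succ M =>
  -- nonnegativity at size M+1
  have nonneg : ∀ (r c : Fin (M + 1) → ℕ), StrictMono r → StrictMono c →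
      0 ≤ (pmat r c).det := by
    intro r c hr hc
    by_cases h : ∀ i, r i ≤ c i
    · exact (IH M (Nat.lt_succ_self M) r c hr hc h).le
    · push_neg at h
      obtain ⟨i, hi⟩ := h
      rw [det_eq_zero_of_bad r c hr.monotone hc.monotone i hi]
  -- Case A : r 0 = 0
  have caseA : ∀ (r c : Fin (M + 2) → ℕ), StrictMono r → StrictMono c →
      (∀ i, r i ≤ c i) → r 0 = 0 → 0 < (pmat r c).det := by
    intro r c hr hc hrc h0
    have hrpos : ∀ i : Fin (M + 1), 1 ≤ r i.succ := by
      intro i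
      have := hr (Fin.succ_pos i)
      omega
    by_cases hc0 : c 0 = 0
    · -- expand along the first column
      rw [Matrix.det_succ_column_zero]
      rw [Finset.sum_eq_single 0]
      · have h00 : pmat r c 0 0 = 1 := by simp [pmat, h0, hc0]
        have hsub : (pmat r c).submatrix (Fin.succAbove 0) Fin.succ =
            pmat (fun i : Fin (M + 1) => r i.succ) (fun j : Fin (M + 1) => c j.succ) := by
          ext i j
          simp [pmat, Matrix.submatrix_apply, Fin.succAbove_zero]
        rw [h00, hsub]
        simpa using IH M (Nat.lt_succ_self M) _ _
          (fun i i' h => hr (Fin.succ_lt_succ_iff.mpr h))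
          (fun i i' h => hc (Fin.succ_lt_succ_iff.mpr h))
          (fun i => hrc i.succ)
      · intro i _ hi
        have : c 0 < r i := by
          have h1 : 0 < r i := by
            have := hr (Fin.pos_of_ne_zero hi)
            omega
          omega
        simp [pmat, Nat.choose_eq_zero_of_lt this]
      · intro h; exact absurd (Finset.mem_univ 0) h
    · -- c 0 > 0 : column-difference expansion
      have hc0' : 0 < c 0 := Nat.pos_of_ne_zero hc0
      set U : Matrix (Fin (M + 2)) (Fin (M + 2)) ℚ :=
        Matrix.of fun k j => (if k = j then (1 : ℚ) else 0) +
          (if (k : ℕ) + 1 = (j : ℕ) then (-1 : ℚ) else 0) with hU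
      have hUdet : U.det = 1 := by
        rw [Matrix.det_of_upperTriangular]
        · apply Finset.prod_eq_one
          intro k _
          simp [hU]
        · intro i j hij
          have h1 : ¬ (i = j) := by
            intro h; rw [h] at hij; exact lt_irrefl _ hij
          have h2 : ¬ ((i : ℕ) + 1 = (j : ℕ)) := by
            have : (j : ℕ) < (i : ℕ) := hij
            omega
          simp [hU, h1, h2]
      have hMU0 : ∀ i : Fin (M + 2), (pmat r c * U) i 0 = pmat r c i 0 := by
        intro i
        rw [Matrix.mul_apply]
        have : ∀ k : Fin (M + 2), pmat r c i k * U k 0 =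
            if k = 0 then pmat r c i 0 else 0 := by
          intro k
          by_cases h : k = 0
          · subst h; simp [hU]
          · have h2 : ¬ ((k : ℕ) + 1 = ((0 : Fin (M + 2)) : ℕ)) := by simp
            simp [hU, h, h2]
        rw [Finset.sum_congr rfl (fun k _ => this k), Finset.sum_ite_eq' Finset.univ 0]
        simp
      have hMUs : ∀ (i : Fin (M + 2)) (j : Fin (M + 1)),
          (pmat r c * U) i j.succ = pmat r c i j.succ - pmat r c i j.castSucc := by
        intro i j
        rw [Matrix.mul_apply]
        have key : ∀ k : Fin (M + 2), pmat r c i k * U k j.succ =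
            (if k = j.succ then pmat r c i j.succ else 0) +
            (if k = j.castSucc then -pmat r c i j.castSucc else 0) := by
          intro k
          have hcs : ((j.castSucc : ℕ) + 1 = (j.succ : ℕ)) := by simp
          by_cases h1 : k = j.succ
          · subst h1
            have h2 : ¬ ((j.succ : Fin (M+2)) = j.castSucc) := by
              intro h
              have := congrArg (Fin.val) h
              simp at this
            have h3 : ¬ ((j.succ : ℕ) + 1 = (j.succ : ℕ)) := by omega
            simp [hU, h2, h3]
          · by_cases h2 : k = j.castSucc
            · subst h2
              have h3 : ¬ ((j.castSucc : Fin (M+2)) = j.succ) := by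
                intro h
                have := congrArg (Fin.val) h
                simp at this
              simp [hU, h3, hcs]
            · have h3 : ¬ ((k : ℕ) + 1 = (j.succ : ℕ)) := by
                intro h
                apply h2
                apply Fin.ext
                simp only [Fin.coe_castSucc]
                omega
              have h4 : ¬ ((k : ℕ) = (j : ℕ)) := by
                intro h
                apply h2
                apply Fin.ext
                simp only [Fin.coe_castSucc]
                omega
              simp [hU, h1, h2, h3, h4]
        rw [Finset.sum_congr rfl (fun k _ => key k), Finset.sum_add_distrib,
          Finset.sum_ite_eq' Finset.univ, Finset.sum_ite_eq' Finset.univ]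
        simp
        ring
      have hdetMU : (pmat r c).det = (pmat r c * U).det := by
        rw [Matrix.det_mul, hUdet, mul_one]
      rw [hdetMU, Matrix.det_succ_row_zero]
      rw [Finset.sum_eq_single 0]
      · have h00 : (pmat r c * U) 0 0 = 1 := by
          rw [hMU0]
          simp [pmat, h0]
        rw [h00]
        simp only [Fin.val_zero, pow_zero, one_mul]
        set P : Matrix (Fin (M + 1)) (Fin (M + 1)) ℚ :=
          (pmat r c * U).submatrix Fin.succ (Fin.succAbove 0) with hP
        set r' : Fin (M + 1) → ℕ := fun i => r i.succ - 1 with hr'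
        set S : Fin (M + 1) → Finset ℕ := fun j => Finset.Ico (c j.castSucc) (c j.succ) with hS
        have hr'mono : StrictMono r' := by
          intro i i' h
          have h1 := hr (Fin.succ_lt_succ_iff.mpr h)
          have h2 := hrpos i
          simp only [hr']
          omega
        -- the entries of P are sums of binomials
        have hPentry : ∀ i j, P i j = ∑ d ∈ S j, ((d.choose (r' i) : ℚ)) := by
          intro i j
          have hsA : (0 : Fin (M + 2)).succAbove j = j.succ := by
            rw [Fin.succAbove_zero]
          rw [hP]
          simp only [Matrix.submatrix_apply, hsA]
          rw [hMUs]
          have hle : c j.castSucc ≤ c j.succ := (hc (Fin.castSucc_lt_succ (i := j))).le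
          rw [hS]
          rw [sum_Ico_choose_q _ _ _ hle]
          have : r' i + 1 = r i.succ := by
            have := hrpos i
            simp only [hr']
            omega
          rw [this]
          rfl
        -- multilinear expansion
        have hPdet : P.det = ∑ D ∈ Fintype.piFinset S,
            (pmat r' (fun j => D j)).det := by
          rw [← Matrix.det_transpose P]
          have hPt : Pᵀ = Matrix.of fun j => ∑ d ∈ S j,
              (fun i : Fin (M + 1) => ((d.choose (r' i) : ℚ))) := by
            ext j i
            simp only [Matrix.transpose_apply, Matrix.of_apply, Finset.sum_apply]
            exact hPentry i j
          rw [hPt]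
          have hml := (Matrix.detRowAlternating (n := Fin (M + 1))
            (R := ℚ)).toMultilinearMap.map_sum_finset
            (fun (j : Fin (M + 1)) (d : ℕ) => fun i : Fin (M + 1) => ((d.choose (r' i) : ℚ))) S
          have e1 : (Matrix.of fun j => ∑ d ∈ S j,
              (fun i : Fin (M + 1) => ((d.choose (r' i) : ℚ)))).det =
              (Matrix.detRowAlternating (n := Fin (M + 1)) (R := ℚ)).toMultilinearMap
                (fun j => ∑ d ∈ S j, fun i : Fin (M + 1) => ((d.choose (r' i) : ℚ))) := rfl
          rw [e1, hml]
          apply Finset.sum_congr rfl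
          intro D _
          have : (pmat r' (fun j => D j)).det =
              ((pmat r' (fun j => D j))ᵀ).det := (Matrix.det_transpose _).symm
          rw [this]
          rfl
        rw [hPdet]
        -- each term is nonnegative; one term is positive
        have hterm_nonneg : ∀ D ∈ Fintype.piFinset S,
            0 ≤ (pmat r' (fun j => D j)).det := by
          intro D hD
          have hDmem : ∀ j, D j ∈ S j := by
            intro j
            exact Fintype.mem_piFinset.mp hD j
          have hDmono : StrictMono (fun j => D j) := by
            rw [Fin.strictMono_iff_lt_succ]
            intro i
            have h1 := hDmem i.castSucc
            have h2 := hDmem i.succ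
            simp only [hS, Finset.mem_Ico] at h1 h2
            have h3 : c i.castSucc.succ ≤ c i.succ.castSucc := by
              rw [Fin.succ_castSucc]
            omega
          exact nonneg _ _ hr'mono hDmono
        apply Finset.sum_pos'
        · exact hterm_nonneg
        · refine ⟨fun j => max (c j.castSucc) (r' j), ?_, ?_⟩
          · rw [Fintype.mem_piFinset]
            intro j
            simp only [hS, Finset.mem_Ico]
            constructor
            · exact le_max_left _ _
            · have h1 : c j.castSucc < c j.succ := hc (Fin.castSucc_lt_succ (i := j))
              have h2 : r j.succ ≤ c j.succ := hrc j.succ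
              have h3 := hrpos j
              simp only [hr']
              omega
          · apply IH M (Nat.lt_succ_self M) _ _ hr'mono
            · intro i i' h
              have h1 : c i.castSucc < c i'.castSucc := hc (by simpa using h)
              have h2 : r i.succ < r i'.succ := hr (Fin.succ_lt_succ_iff.mpr h)
              have h3 := hrpos i
              simp only [hr']
              omega
            · intro j
              exact le_max_right _ _
      · intro j _ hj
        obtain ⟨j', rfl⟩ : ∃ j' : Fin (M + 1), j = j'.succ := by
          rcases Fin.eq_zero_or_eq_succ j with h | h
          · exact absurd h hj
          · exact h
        rw [hMUs]
        have : pmat r c 0 j'.succ = 1 ∧ pmat r c 0 j'.castSucc = 1 := by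
          constructor <;> simp [pmat, h0]
        rw [this.1, this.2]
        ring
      · intro h; exact absurd (Finset.mem_univ 0) h
  -- Case B : general, by induction on a bound for r 0
  have caseB : ∀ k (r c : Fin (M + 2) → ℕ), StrictMono r → StrictMono c →
      (∀ i, r i ≤ c i) → r 0 ≤ k → 0 < (pmat r c).det := by
    intro k
    induction k with
    | zero =>
      intro r c hr hc hrc h
      exact caseA r c hr hc hrc (Nat.le_zero.mp h)
    | succ k IHk =>
      intro r c hr hc hrc h
      by_cases h0 : r 0 = 0
      · exact caseA r c hr hc hrc h0
      · have hr1 : ∀ i, 1 ≤ r i := by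
          intro i
          have := hr.monotone (Fin.zero_le i)
          omega
        have hc1 : ∀ j, 1 ≤ c j := by
          intro j
          have h1 := hrc 0
          have h2 := hc.monotone (Fin.zero_le j)
          have h3 := hr1 0
          omega
        have hscale := det_scale r c hr1 hc1
        have hdet' : 0 < (pmat (fun i => r i - 1) (fun j => c j - 1)).det := by
          apply IHk
          · intro i i' hii
            show r i - 1 < r i' - 1
            have := hr hii
            have := hr1 i
            omega
          · intro j j' hjj
            show c j - 1 < c j' - 1
            have := hc hjj
            have := hc1 j
            omega
          · intro i
            show r i - 1 ≤ c i - 1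
            have := hrc i
            have := hr1 i
            omega
          · show r 0 - 1 ≤ k
            omega
        have hrpos : 0 < ∏ i, (r i : ℚ) := by
          apply Finset.prod_pos
          intro i _
          exact_mod_cast hr1 i
        have hcpos : 0 < ∏ j, (c j : ℚ) := by
          apply Finset.prod_pos
          intro j _
          exact_mod_cast hc1 j
        have h4 : 0 < (∏ i, (r i : ℚ)) * (pmat r c).det := by
          rw [hscale]
          exact mul_pos hcpos hdet'
        by_contra hcon
        push_neg at hcon
        nlinarith
  intro r c hr hc hrc
  exact caseB (r 0) r c hr hc hrc le_rfl

lemma rank_lemma {m n p : ℕ} (A : Matrix (Fin (m + 1)) (Fin (n + 1)) ℚ)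
    (f : Fin (p + 1) → Fin (m + 1)) (g : Fin (p + 1) → Fin (n + 1))
    (h : IsUnit (A.submatrix f g)) : p + 1 ≤ A.rank := by
  have hrank : (A.submatrix f g).rank = p + 1 := by
    rw [Matrix.rank_of_isUnit _ h, Fintype.card_fin]
  have hfac : A.submatrix f g =
      (1 : Matrix (Fin (m + 1)) (Fin (m + 1)) ℚ).submatrix f (Equiv.refl _) *
        (A * (1 : Matrix (Fin (n + 1)) (Fin (n + 1)) ℚ).submatrix (Equiv.refl _) g) := by
    rw [Matrix.mul_submatrix_one, Matrix.one_submatrix_mul, Matrix.submatrix_submatrix]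
    simp
  calc p + 1 = (A.submatrix f g).rank := hrank.symm
    _ ≤ (A * (1 : Matrix (Fin (n + 1)) (Fin (n + 1)) ℚ).submatrix (Equiv.refl _) g).rank := by
        rw [hfac]; exact Matrix.rank_mul_le_right _ _
    _ ≤ A.rank := Matrix.rank_mul_le_left _ _

end PascalAux

/-- If `{[r 0, …, r m], [c 0, …, c n]}` admits an ordered sub-pair of length
`p + 1`, then the Pascal submatrix `T_{r,c}` has rank at least `p + 1`. -/
theorem pascal_rank_ge_of_orderedSubPair
    (m n p : ℕ) (r c : ℕ → ℕ) (hr : StrictMono r) (hc : StrictMono c)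
    (hsub : ∃ α β : ℕ → ℕ, OrderedSubPair r c m n p α β) :
    p + 1 ≤ (pascalSub r c m n).rank := by
  obtain ⟨α, β, hα, hβ, hαm, hβn, hrc⟩ := hsub
  have hip : ∀ i : Fin (p + 1), (i : ℕ) ≤ p := fun i => Nat.lt_succ_iff.mp i.isLt
  have hαle : ∀ i : Fin (p + 1), α (i : ℕ) ≤ m := by
    intro i
    refine le_trans ?_ hαm
    rcases eq_or_lt_of_le (hip i) with h | h
    · rw [h]
    · exact (hα (Set.mem_Iic.mpr (le_of_lt h)) (Set.mem_Iic.mpr le_rfl) h).le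
  have hβle : ∀ j : Fin (p + 1), β (j : ℕ) ≤ n := by
    intro j
    refine le_trans ?_ hβn
    rcases eq_or_lt_of_le (hip j) with h | h
    · rw [h]
    · exact (hβ (Set.mem_Iic.mpr (le_of_lt h)) (Set.mem_Iic.mpr le_rfl) h).le
  set f : Fin (p + 1) → Fin (m + 1) := fun i => ⟨α (i : ℕ), Nat.lt_succ_of_le (hαle i)⟩ with hf
  set g : Fin (p + 1) → Fin (n + 1) := fun j => ⟨β (j : ℕ), Nat.lt_succ_of_le (hβle j)⟩ with hg
  have hS : (pascalSub r c m n).submatrix f g =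
      PascalAux.pmat (fun i : Fin (p + 1) => r (α (i : ℕ)))
        (fun j : Fin (p + 1) => c (β (j : ℕ))) := rfl
  have hdet : 0 < ((pascalSub r c m n).submatrix f g).det := by
    rw [hS]
    apply PascalAux.det_pos
    · intro i j h
      exact hr (hα (Set.mem_Iic.mpr (hip i)) (Set.mem_Iic.mpr (hip j)) h)
    · intro i j h
      exact hc (hβ (Set.mem_Iic.mpr (hip i)) (Set.mem_Iic.mpr (hip j)) h)
    · intro i
      exact hrc (i : ℕ) (hip i)
  exact PascalAux.rank_lemma _ f g
    (((pascalSub r c m n).submatrix f g).isUnit_iff_isUnit_det.mpr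
      (isUnit_iff_ne_zero.mpr hdet.ne'))
end

section
/- Let r = [r_0, ..., r_m] and c = [c_0, ..., c_n] be strictly increasing sequences of natural numbers. Then the rank of the matrix T_{r,c} with (i,j) entry C(c_j, r_i) equals the maximal length of an ordered sub-pair for {r, c} (and equals 0 if no ordered sub-pair exists). -/
open Matrix Finset


/-- Square binomial matrix with rows `r 0,…,r p` and columns `c 0,…,c p`. -/
def pmat (p : ℕ) (r c : ℕ → ℕ) : Matrix (Fin (p+1)) (Fin (p+1)) ℚ :=
  Matrix.of fun i j => ((c (j:ℕ)).choose (r (i:ℕ)) : ℚ)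

def tsel (p : ℕ) (r : ℕ → ℕ) (s : Finset (Fin (p+2))) : ℕ → ℕ :=
  fun x => if h : x < p+2 then (if (⟨x, h⟩ : Fin (p+2)) ∈ s then r x - 1 else r x) else r x

lemma tsel_bounds (p : ℕ) (r : ℕ → ℕ) (s : Finset (Fin (p+2))) (x : ℕ) :
    r x - 1 ≤ tsel p r s x ∧ tsel p r s x ≤ r x := by
  unfold tsel; split_ifs <;> omega

lemma tsel_apply (p : ℕ) (r : ℕ → ℕ) (s : Finset (Fin (p+2))) (i : Fin (p+2)) :
    tsel p r s (i : ℕ) = if i ∈ s then r (i:ℕ) - 1 else r (i:ℕ) := by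
  simp [tsel, i.isLt]

theorem pmat_key (p : ℕ) : ∀ (N : ℕ) (r c : ℕ → ℕ), c p ≤ N →
    (∀ i j : ℕ, i < j → j ≤ p → r i < r j) →
    (∀ i j : ℕ, i < j → j ≤ p → c i < c j) →
    0 ≤ (pmat p r c).det ∧ ((∀ i ≤ p, r i ≤ c i) → 0 < (pmat p r c).det) := by
  induction p with
  | zero =>
    intro N r c _ _ _
    constructor
    · simp [pmat, Matrix.det_fin_one]
    · intro h
      simp [pmat, Matrix.det_fin_one]
      exact_mod_cast Nat.choose_pos (h 0 le_rfl)
  | succ p IH =>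
    intro N
    induction N using Nat.strong_induction_on with
    | _ N IHN =>
    intro r c hcN hr hc
    rcases lt_trichotomy (r 0) (c 0) with hlt | heq | hgt
    · classical
      have hc1 : ∀ j : ℕ, j ≤ p+1 → 1 ≤ c j := by
        intro j hj
        rcases Nat.eq_zero_or_pos j with h | h
        · subst h; omega
        · have := hc 0 j h hj; omega
      set A : Fin (p+2) → Fin (p+2) → ℚ :=
        fun i j => ((c (j:ℕ) - 1).choose (r (i:ℕ)) : ℚ) with hA
      set B : Fin (p+2) → Fin (p+2) → ℚ :=
        fun i j => if r (i:ℕ) = 0 then 0 else ((c (j:ℕ) - 1).choose (r (i:ℕ) - 1) : ℚ) with hB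
      have hdet : (pmat (p+1) r c).det
          = ∑ s : Finset (Fin (p+2)), (Matrix.of (s.piecewise B A)).det := by
        have h1 : pmat (p+1) r c = Matrix.of (B + A) := by
          ext i j
          simp only [pmat, Matrix.of_apply, Pi.add_apply]
          by_cases hri : r (i:ℕ) = 0
          · simp [hA, hB, hri]
          · have hcj : 1 ≤ c (j:ℕ) := hc1 _ (by omega)
            simp only [hB, hA, if_neg hri]
            obtain ⟨k, hk⟩ : ∃ k, r (i:ℕ) = k + 1 :=
              ⟨r (i:ℕ) - 1, by omega⟩
            obtain ⟨l, hl⟩ : ∃ l, c (j:ℕ) = l + 1 := ⟨c (j:ℕ) - 1, by omega⟩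
            rw [hk, hl]
            simp only [Nat.add_sub_cancel, Nat.choose_succ_succ]
            push_cast
            ring
        rw [h1]
        show Matrix.detRowAlternating (B + A) = _
        rw [show Matrix.detRowAlternating (B + A)
            = (Matrix.detRowAlternating (R := ℚ) (n := Fin (p+2))).toMultilinearMap (B + A) from rfl]
        rw [MultilinearMap.map_add_univ]
        rfl
      have hterm : ∀ s : Finset (Fin (p+2)), (∀ i ∈ s, r (i:ℕ) ≠ 0) →
          Matrix.of (s.piecewise B A) = pmat (p+1) (tsel p r s) (fun x => c x - 1) := by
        intro s hs
        ext i j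
        rw [Matrix.of_apply]
        by_cases hi : i ∈ s
        · rw [Finset.piecewise_eq_of_mem _ _ _ hi]
          simp [hB, if_neg (hs i hi), pmat, tsel_apply, hi]
        · rw [Finset.piecewise_eq_of_notMem _ _ _ hi]
          simp [hA, pmat, tsel_apply, hi]
      have hN1 : 1 ≤ N := by have := hc1 (p+1) le_rfl; omega
      have key : ∀ s : Finset (Fin (p+2)), 0 ≤ (Matrix.of (s.piecewise B A)).det := by
        intro s
        by_cases hz : ∀ i ∈ s, r (i:ℕ) ≠ 0
        · rw [hterm s hz]
          by_cases hmono : ∀ x y : ℕ, x < y → y ≤ p+1 → tsel p r s x < tsel p r s y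
          · exact (IHN (N-1) (by omega) (tsel p r s) (fun x => c x - 1)
              (Nat.sub_le_sub_right hcN 1) hmono
              (fun x y hxy hyp => by
                show c x - 1 < c y - 1
                have := hc x y hxy hyp; have := hc1 x (by omega); omega)).1
          · push_neg at hmono
            obtain ⟨x, y, hxy, hyp, hnlt⟩ := hmono
            have hrxy := hr x y hxy hyp
            have hb1 := tsel_bounds p r s x
            have hb2 := tsel_bounds p r s y
            have hxye : tsel p r s x = tsel p r s y := by omega
            apply le_of_eq
            symm
            apply Matrix.det_zero_of_row_eq (M := pmat (p+1) (tsel p r s) (fun x => c x - 1))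
              (i := (⟨x, by omega⟩ : Fin (p+2))) (j := ⟨y, by omega⟩)
            · exact fun h => (by omega : x ≠ y) (congrArg Fin.val h)
            · funext j
              simp only [pmat, Matrix.of_apply]
              rw [hxye]
        · push_neg at hz
          obtain ⟨i, his, hri⟩ := hz
          apply le_of_eq
          symm
          apply Matrix.det_eq_zero_of_row_eq_zero i
          intro j
          rw [Matrix.of_apply, Finset.piecewise_eq_of_mem _ _ _ his]
          simp [hB, hri]
      constructor
      · rw [hdet]
        exact Finset.sum_nonneg fun s _ => key s
      · intro hcond
        set s₀ : Finset (Fin (p+2)) := univ.filter (fun i : Fin (p+2) => r (i:ℕ) = c (i:ℕ)) with hs₀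
        have hmem : ∀ i : Fin (p+2), i ∈ s₀ ↔ r (i:ℕ) = c (i:ℕ) := by
          intro i; simp [hs₀]
        have hz₀ : ∀ i ∈ s₀, r (i:ℕ) ≠ 0 := by
          intro i hi
          have h1 := (hmem i).1 hi
          have h2 := hc1 (i:ℕ) (by omega)
          omega
        have ht₀ : ∀ x : ℕ, x ≤ p+1 → tsel p r s₀ x = if r x = c x then r x - 1 else r x := by
          intro x hx
          have := tsel_apply p r s₀ ⟨x, by omega⟩
          rw [show ((⟨x, by omega⟩ : Fin (p+2)) : ℕ) = x from rfl] at this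
          rw [this]
          by_cases hrc : r x = c x
          · rw [if_pos ((hmem _).2 hrc), if_pos hrc]
          · rw [if_neg (fun hh => hrc ((hmem _).1 hh)), if_neg hrc]
        have hmono₀ : ∀ x y : ℕ, x < y → y ≤ p+1 → tsel p r s₀ x < tsel p r s₀ y := by
          intro x y hxy hyp
          rw [ht₀ x (by omega), ht₀ y hyp]
          have h1 := hr x y hxy hyp
          have h2 := hc x y hxy hyp
          have h3 := hcond x (by omega)
          have h4 := hcond y hyp
          have h5 := hc1 x (by omega)
          split_ifs <;> omega
        have hle₀ : ∀ x ≤ p+1, tsel p r s₀ x ≤ c x - 1 := by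
          intro x hx
          rw [ht₀ x hx]
          have := hcond x hx
          have := hc1 x hx
          split_ifs <;> omega
        have hpos := (IHN (N-1) (by omega) (tsel p r s₀) (fun x => c x - 1)
          (Nat.sub_le_sub_right hcN 1) hmono₀
          (fun x y hxy hyp => by
            show c x - 1 < c y - 1
            have := hc x y hxy hyp; have := hc1 x (by omega); omega)).2 hle₀
        rw [hdet]
        refine Finset.sum_pos' (fun s _ => key s) ⟨s₀, Finset.mem_univ _, ?_⟩
        rw [hterm s₀ hz₀]
        exact hpos
    · -- r 0 = c 0 : reduce size
      have col : ∀ i : Fin (p+2), pmat (p+1) r c i 0 = if (i:ℕ) = 0 then 1 else 0 := by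
        intro i
        by_cases hi : (i : ℕ) = 0
        · simp [pmat, hi, heq, Nat.choose_self]
        · have : c 0 < r (i : ℕ) := heq ▸ hr 0 i (by omega) (by omega)
          simp [pmat, hi, Nat.choose_eq_zero_of_lt this]
      have hsub : (pmat (p+1) r c).submatrix (Fin.succAbove 0) Fin.succ
          = pmat p (fun x => r (x+1)) (fun x => c (x+1)) := by
        ext i j
        simp [pmat, Fin.succAbove_zero, Fin.val_succ]
      have hdet : (pmat (p+1) r c).det = (pmat p (fun x => r (x+1)) (fun x => c (x+1))).det := by
        rw [Matrix.det_succ_column_zero]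
        rw [Finset.sum_eq_single 0]
        · rw [col, hsub]
          simp
        · intro i _ hi
          rw [col]
          have : (i : ℕ) ≠ 0 := fun h => hi (Fin.ext h)
          simp [this]
        · simp
      obtain ⟨h1, h2⟩ := IH (c (p+1)) (fun x => r (x+1)) (fun x => c (x+1)) le_rfl
        (fun i j hij hjp => hr (i+1) (j+1) (by omega) (by omega))
        (fun i j hij hjp => hc (i+1) (j+1) (by omega) (by omega))
      refine ⟨hdet ▸ h1, fun hcond => hdet ▸ h2 (fun i hi => hcond (i+1) (by omega))⟩
    · -- c 0 < r 0 : zero column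
      have hz : (pmat (p+1) r c).det = 0 := by
        apply Matrix.det_eq_zero_of_column_eq_zero 0
        intro i
        have : c 0 < r (i : ℕ) := by
          rcases Nat.eq_zero_or_pos (i : ℕ) with h | h
          · rw [h]; exact hgt
          · exact lt_trans hgt (hr 0 i h (by omega))
        simp [pmat, Nat.choose_eq_zero_of_lt this]
      rw [hz]
      exact ⟨le_rfl, fun hcond => absurd (hcond 0 (by omega)) (by omega)⟩


theorem pmat_det_eq_zero (p : ℕ) (r c : ℕ → ℕ)
    (hr : ∀ i j : ℕ, i ≤ j → j ≤ p → r i ≤ r j)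
    (hc : ∀ i j : ℕ, i ≤ j → j ≤ p → c i ≤ c j)
    (i0 : ℕ) (hi0 : i0 ≤ p) (h : c i0 < r i0) :
    (pmat p r c).det = 0 := by
  rw [Matrix.det_apply]
  apply Finset.sum_eq_zero
  intro σ _
  have hex : ∃ i : Fin (p+1), (i:ℕ) ≤ i0 ∧ i0 ≤ ((σ i : Fin (p+1)) : ℕ) := by
    by_contra hcon
    push_neg at hcon
    have hmaps : ∀ i ∈ Finset.Iic (⟨i0, by omega⟩ : Fin (p+1)),
        σ i ∈ Finset.Iio (⟨i0, by omega⟩ : Fin (p+1)) := by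
      intro i hi
      rw [Finset.mem_Iic, Fin.le_def] at hi
      rw [Finset.mem_Iio, Fin.lt_def]
      exact hcon i hi
    have hcard := Finset.card_le_card_of_injOn σ hmaps σ.injective.injOn
    rw [Fin.card_Iic, Fin.card_Iio] at hcard
    simp at hcard
  obtain ⟨i, h1, h2⟩ := hex
  have hentry : pmat p r c (σ i) i = 0 := by
    have hcc : c (i:ℕ) ≤ c i0 := hc _ _ h1 hi0
    have hrr : r i0 ≤ r ((σ i : Fin (p+1)) : ℕ) := hr _ _ h2 (by omega)
    simp only [pmat, Matrix.of_apply]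
    rw [Nat.choose_eq_zero_of_lt (by omega)]
    simp
  have hz : (∏ j : Fin (p+1), pmat p r c (σ j) j) = 0 :=
    Finset.prod_eq_zero (Finset.mem_univ i) hentry
  rw [hz, smul_zero]


theorem rank_ge_of_isUnit_submatrix {a b k : ℕ} (M : Matrix (Fin a) (Fin b) ℚ)
    (f : Fin k → Fin a) (g : Fin k → Fin b)
    (h : IsUnit (M.submatrix f g)) : k ≤ M.rank := by
  have hcols : LinearIndependent ℚ (fun j : Fin k => (M.submatrix f g)ᵀ j) :=
    Matrix.linearIndependent_cols_iff_isUnit.mpr h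
  have hv : LinearIndependent ℚ (fun j : Fin k => Mᵀ (g j)) := by
    apply LinearIndependent.of_comp (LinearMap.funLeft ℚ ℚ f)
    convert hcols using 1
    funext j; rfl
  rw [Matrix.rank_eq_finrank_span_cols]
  calc k = Module.finrank ℚ (Submodule.span ℚ (Set.range fun j : Fin k => Mᵀ (g j))) := by
        rw [finrank_span_eq_card hv, Fintype.card_fin]
    _ ≤ Module.finrank ℚ (Submodule.span ℚ (Set.range Mᵀ)) := by
        apply Submodule.finrank_mono
        apply Submodule.span_mono
        rintro _ ⟨j, rfl⟩; exact ⟨g j, rfl⟩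

theorem rank_eq_of_indep_cols {a k : ℕ} (B : Matrix (Fin a) (Fin k) ℚ)
    (h : LinearIndependent ℚ (fun j => Bᵀ j)) : B.rank = k := by
  rw [Matrix.rank_eq_finrank_span_cols]
  rw [show (Set.range B.col) = Set.range (fun j => Bᵀ j) from rfl]
  rw [finrank_span_eq_card h, Fintype.card_fin]

theorem exists_indep_cols {ι : Type} [Fintype ι] {b k : ℕ} (M : Matrix ι (Fin (b+1)) ℚ)
    (hk : M.rank = k) :
    ∃ g : Fin k → Fin (b+1), StrictMono g ∧ LinearIndependent ℚ (fun j => Mᵀ (g j)) := by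
  classical
  obtain ⟨s, hs_sub, hs_span, hs_ind⟩ := exists_linearIndependent ℚ (Set.range Mᵀ)
  have hsfin : s.Finite := (Set.finite_range Mᵀ).subset hs_sub
  haveI := hsfin.fintype
  have hcard : s.toFinset.card = k := by
    rw [← finrank_span_set_eq_card hs_ind]
    rw [show Submodule.span ℚ s = Submodule.span ℚ (Set.range Mᵀ) from hs_span]
    rw [show Set.range Mᵀ = Set.range M.col from rfl, ← Matrix.rank_eq_finrank_span_cols, hk]
  set idx : (ι → ℚ) → Fin (b+1) :=
    fun v => if h : ∃ j, Mᵀ j = v then h.choose else 0 with hidxdef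
  have hidx : ∀ v ∈ s, Mᵀ (idx v) = v := by
    intro v hv
    have h : ∃ j, Mᵀ j = v := hs_sub hv
    simp only [hidxdef, dif_pos h]
    exact h.choose_spec
  set J : Finset (Fin (b+1)) := s.toFinset.image idx with hJdef
  have hJcard : J.card = k := by
    rw [hJdef, Finset.card_image_of_injOn, hcard]
    intro v1 h1 v2 h2 he
    rw [← hidx v1 (Set.mem_toFinset.mp h1), ← hidx v2 (Set.mem_toFinset.mp h2), he]
  set g : Fin k → Fin (b+1) := ⇑(J.orderEmbOfFin hJcard) with hgdef
  have hmem : ∀ j : Fin k, Mᵀ (g j) ∈ s := by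
    intro j
    have : g j ∈ J := J.orderEmbOfFin_mem hJcard j
    rw [hJdef, Finset.mem_image] at this
    obtain ⟨v, hv, hvj⟩ := this
    rw [← hvj, hidx v (Set.mem_toFinset.mp hv)]
    exact Set.mem_toFinset.mp hv
  refine ⟨g, (J.orderEmbOfFin hJcard).strictMono, ?_⟩
  have hu : LinearIndependent ℚ ((fun x : s => (x : ι → ℚ)) ∘ (fun j : Fin k => (⟨Mᵀ (g j), hmem j⟩ : s))) := by
    apply hs_ind.comp
    intro j1 j2 he
    have hMe : Mᵀ (g j1) = Mᵀ (g j2) := congrArg Subtype.val he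
    have hJ1 : g j1 ∈ J := J.orderEmbOfFin_mem hJcard j1
    have hJ2 : g j2 ∈ J := J.orderEmbOfFin_mem hJcard j2
    rw [hJdef, Finset.mem_image] at hJ1 hJ2
    obtain ⟨v1, hv1, hvj1⟩ := hJ1
    obtain ⟨v2, hv2, hvj2⟩ := hJ2
    have e1 : Mᵀ (g j1) = v1 := by rw [← hvj1]; exact hidx v1 (Set.mem_toFinset.mp hv1)
    have e2 : Mᵀ (g j2) = v2 := by rw [← hvj2]; exact hidx v2 (Set.mem_toFinset.mp hv2)
    have : v1 = v2 := by rw [← e1, ← e2, hMe]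
    have hg12 : g j1 = g j2 := by rw [← hvj1, ← hvj2, this]
    exact (J.orderEmbOfFin hJcard).injective hg12
  exact hu

theorem exists_unit_submatrix {a b k : ℕ} (M : Matrix (Fin (a+1)) (Fin (b+1)) ℚ)
    (hk : M.rank = k) :
    ∃ (f : Fin k → Fin (a+1)) (g : Fin k → Fin (b+1)), StrictMono f ∧ StrictMono g ∧
      IsUnit (M.submatrix f g) := by
  obtain ⟨g, hg, hgind⟩ := exists_indep_cols M hk
  set B : Matrix (Fin (a+1)) (Fin k) ℚ := M.submatrix id g with hBdef
  have hB : B.rank = k := rank_eq_of_indep_cols B hgind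
  have hBT : Bᵀ.rank = k := by rw [Matrix.rank_transpose]; exact hB
  obtain ⟨f, hf, hfind⟩ := exists_indep_cols Bᵀ hBT
  refine ⟨f, g, hf, hg, ?_⟩
  rw [← Matrix.linearIndependent_rows_iff_isUnit]
  exact hfind


/-- The rank of the Pascal submatrix `T_{r,c}` equals the maximal length of an
ordered sub-pair for `{[r 0, …, r m], [c 0, …, c n]}` (and equals `0` when no
ordered sub-pair exists). -/
theorem pascal_rank_eq_sSup_orderedSubPair_lengths
    (m n : ℕ) (r c : ℕ → ℕ) (hr : StrictMono r) (hc : StrictMono c) :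
    (pascalSub r c m n).rank =
      sSup {L : ℕ | L = 0 ∨ ∃ (p : ℕ) (α β : ℕ → ℕ),
        L = p + 1 ∧ OrderedSubPair r c m n p α β} := by
  classical
  set M := pascalSub r c m n with hM
  set K := {L : ℕ | L = 0 ∨ ∃ (p : ℕ) (α β : ℕ → ℕ),
    L = p + 1 ∧ OrderedSubPair r c m n p α β} with hK
  have h0K : (0:ℕ) ∈ K := Or.inl rfl
  have hub : ∀ L ∈ K, L ≤ M.rank := by
    intro L hL
    rcases hL with rfl | ⟨p, α, β, rfl, hosp⟩
    · exact Nat.zero_le _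
    · obtain ⟨hα, hβ, hαm, hβn, hrc⟩ := hosp
      have hαle : ∀ i ≤ p, α i ≤ α p := by
        intro i hi
        rcases eq_or_lt_of_le hi with h | h
        · rw [h]
        · exact le_of_lt (hα (Set.mem_Iic.mpr hi) (Set.mem_Iic.mpr le_rfl) h)
      have hβle : ∀ i ≤ p, β i ≤ β p := by
        intro i hi
        rcases eq_or_lt_of_le hi with h | h
        · rw [h]
        · exact le_of_lt (hβ (Set.mem_Iic.mpr hi) (Set.mem_Iic.mpr le_rfl) h)
      set f : Fin (p+1) → Fin (m+1) := fun i =>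
        ⟨α (i:ℕ), by have := hαle (i:ℕ) (Fin.is_le i); omega⟩ with hf
      set g : Fin (p+1) → Fin (n+1) := fun j =>
        ⟨β (j:ℕ), by have := hβle (j:ℕ) (Fin.is_le j); omega⟩ with hg
      have hS : M.submatrix f g = pmat p (fun x => r (α x)) (fun x => c (β x)) := by
        ext i j; rfl
      have hr' : ∀ i j : ℕ, i < j → j ≤ p → r (α i) < r (α j) := fun i j hij hjp =>
        hr (hα (Set.mem_Iic.mpr (by omega)) (Set.mem_Iic.mpr hjp) hij)
      have hc' : ∀ i j : ℕ, i < j → j ≤ p → c (β i) < c (β j) := fun i j hij hjp =>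
        hc (hβ (Set.mem_Iic.mpr (by omega)) (Set.mem_Iic.mpr hjp) hij)
      have hpos := (pmat_key p (c (β p)) (fun x => r (α x)) (fun x => c (β x))
        le_rfl hr' hc').2 hrc
      have hunit : IsUnit (M.submatrix f g) := by
        rw [hS]
        exact (Matrix.isUnit_iff_isUnit_det _).mpr (isUnit_iff_ne_zero.mpr (ne_of_gt hpos))
      exact rank_ge_of_isUnit_submatrix M f g hunit
  have hrankK : M.rank ∈ K := by
    rcases Nat.eq_zero_or_pos M.rank with h0 | hposr
    · rw [h0]; exact h0K
    · obtain ⟨q, hq⟩ : ∃ q, M.rank = q + 1 := ⟨M.rank - 1, by omega⟩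
      obtain ⟨f, g, hf, hg, hunit⟩ := exists_unit_submatrix M hq
      set α : ℕ → ℕ := fun x => ((f ⟨min x q, by omega⟩ : Fin (m+1)) : ℕ) with hα
      set β : ℕ → ℕ := fun x => ((g ⟨min x q, by omega⟩ : Fin (n+1)) : ℕ) with hβ
      have hαx : ∀ (x : ℕ) (_ : x ≤ q), α x = ((f ⟨x, by omega⟩ : Fin (m+1)) : ℕ) := by
        intro x hx
        simp only [hα]
        congr 2
        exact Fin.ext (by simp [min_eq_left hx])
      have hβx : ∀ (x : ℕ) (_ : x ≤ q), β x = ((g ⟨x, by omega⟩ : Fin (n+1)) : ℕ) := by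
        intro x hx
        simp only [hβ]
        congr 2
        exact Fin.ext (by simp [min_eq_left hx])
      have hαmono : StrictMonoOn α (Set.Iic q) := by
        intro x hx y hy hxy
        rw [Set.mem_Iic] at hx hy
        rw [hαx x hx, hαx y hy]
        exact hf (show (⟨x, by omega⟩ : Fin (q+1)) < ⟨y, by omega⟩ from Fin.mk_lt_mk.mpr hxy)
      have hβmono : StrictMonoOn β (Set.Iic q) := by
        intro x hx y hy hxy
        rw [Set.mem_Iic] at hx hy
        rw [hβx x hx, hβx y hy]
        exact hg (show (⟨x, by omega⟩ : Fin (q+1)) < ⟨y, by omega⟩ from Fin.mk_lt_mk.mpr hxy)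
      have hS : M.submatrix f g = pmat q (fun x => r (α x)) (fun x => c (β x)) := by
        ext i j
        have e1 : (⟨min (i:ℕ) q, by omega⟩ : Fin (q+1)) = i :=
          Fin.ext (by simp [min_eq_left (Fin.is_le i)])
        have e2 : (⟨min (j:ℕ) q, by omega⟩ : Fin (q+1)) = j :=
          Fin.ext (by simp [min_eq_left (Fin.is_le j)])
        simp only [Matrix.submatrix_apply, pmat, Matrix.of_apply, hα, hβ, hM, pascalSub]
        rw [e1, e2]
      have hcond : ∀ i ≤ q, r (α i) ≤ c (β i) := by
        by_contra hfail
        push_neg at hfail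
        obtain ⟨i0, hi0q, hlt0⟩ := hfail
        have hrm : ∀ i j : ℕ, i ≤ j → j ≤ q → r (α i) ≤ r (α j) := by
          intro i j hij hjq
          rcases eq_or_lt_of_le hij with h | h
          · rw [h]
          · exact le_of_lt (hr (hαmono (Set.mem_Iic.mpr (by omega)) (Set.mem_Iic.mpr hjq) h))
        have hcm : ∀ i j : ℕ, i ≤ j → j ≤ q → c (β i) ≤ c (β j) := by
          intro i j hij hjq
          rcases eq_or_lt_of_le hij with h | h
          · rw [h]
          · exact le_of_lt (hc (hβmono (Set.mem_Iic.mpr (by omega)) (Set.mem_Iic.mpr hjq) h))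
        have hz := pmat_det_eq_zero q (fun x => r (α x)) (fun x => c (β x))
          hrm hcm i0 hi0q hlt0
        rw [← hS] at hz
        exact isUnit_iff_ne_zero.mp ((Matrix.isUnit_iff_isUnit_det _).mp hunit) hz
      refine Or.inr ⟨q, α, β, hq, hαmono, hβmono, ?_, ?_, hcond⟩
      · rw [hαx q le_rfl]; exact Fin.is_le _
      · rw [hβx q le_rfl]; exact Fin.is_le _
  have hbdd : BddAbove K := ⟨M.rank, fun L hL => hub L hL⟩
  exact le_antisymm (le_csSup hbdd hrankK) (csSup_le ⟨0, h0K⟩ hub)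
end

section
/- Let r = [r_0, ..., r_m] and c = [c_0, ..., c_n] be strictly increasing sequences of natural numbers, and let {r̂, ĉ} be a maximal ordered sub-pair for {r, c} of length p+1, with r̂ a subsequence of r selected by indices α_0 < ... < α_p. Then the rows of T_{r,c} indexed by α_0, ..., α_p (i.e., the rows of T_{r̂,c}) span the row space of T_{r,c}. -/
open Finset Matrix Submodule Module

lemma hockey_s8 (s u v : ℕ) (h : u ≤ v) :
    ((v.choose (s+1) : ℚ)) - (u.choose (s+1) : ℚ) = ∑ t ∈ Ico u v, (t.choose s : ℚ) := by
  induction v, h using Nat.le_induction with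
  | base => simp
  | succ v hv ih =>
      rw [Finset.sum_Ico_succ_top (by omega)]
      rw [← ih]
      have : (v+1).choose (s+1) = v.choose s + v.choose (s+1) := Nat.choose_succ_succ v s
      push_cast [this]
      ring

-- L2: card of support bound

lemma card_le_of_supported {ι κ : Type*} [Fintype ι] [Fintype κ] [DecidableEq κ]
    (S : Finset κ) (v : ι → κ → ℚ) (hv : LinearIndependent ℚ v)
    (hsupp : ∀ i, ∀ j ∉ S, v i j = 0) : Fintype.card ι ≤ S.card := by
  classical
  let L : (κ → ℚ) →ₗ[ℚ] (S → ℚ) := LinearMap.funLeft ℚ ℚ (fun s : S => (s : κ))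
  have hind : LinearIndependent ℚ (fun i => L (v i)) := by
    rw [Fintype.linearIndependent_iff] at hv ⊢
    intro g hg
    apply hv
    have h0 : ∀ j : κ, (∑ i, g i • v i) j = 0 := by
      intro j
      by_cases hj : j ∈ S
      · have := congrFun hg ⟨j, hj⟩
        simpa [L, LinearMap.funLeft, Finset.sum_apply] using this
      · simp only [Finset.sum_apply, Pi.smul_apply]
        exact Finset.sum_eq_zero fun i _ => by rw [hsupp i j hj, smul_zero]
    exact funext h0
  have := hind.fintype_card_le_finrank
  simpa [Module.finrank_fintype_fun_eq_card, Fintype.card_coe] using this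

lemma det_choose_zero {q : ℕ} (a t : Fin (q+1) → ℕ) (ha : Monotone a) (ht : Monotone t)
    (j : Fin (q+1)) (hj : t j < a j) :
    (Matrix.of fun i l : Fin (q+1) => ((t l).choose (a i) : ℚ)).det = 0 := by
  classical
  set M : Matrix (Fin (q+1)) (Fin (q+1)) ℚ := Matrix.of fun i l => ((t l).choose (a i) : ℚ) with hM
  by_contra hdet
  have hunit : IsUnit M := (Matrix.isUnit_iff_isUnit_det M).2 (isUnit_iff_ne_zero.2 hdet)
  have hrows : LinearIndependent ℚ (fun i => M i) :=
    Matrix.linearIndependent_rows_iff_isUnit.2 hunit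
  have hsub : LinearIndependent ℚ (fun k : {k : Fin (q+1) // j ≤ k} => M k) :=
    hrows.comp _ Subtype.val_injective
  have hcard := card_le_of_supported (Finset.Ioi j)
    (fun k : {k : Fin (q+1) // j ≤ k} => M k) hsub ?_
  · rw [Fin.card_Ioi] at hcard
    have h1 : Fintype.card {k : Fin (q+1) // j ≤ k} = (Finset.Ici j).card := by
      rw [Fintype.card_subtype]; congr 1; ext k; simp
    rw [h1, Fin.card_Ici] at hcard
    omega
  · intro k l hl
    simp only [Finset.mem_Ioi, not_lt] at hl
    have : t l < a k := lt_of_le_of_lt (ht hl) (lt_of_lt_of_le hj (ha k.2))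
    simp [hM, Nat.choose_eq_zero_of_lt this]

lemma tele {p : ℕ} (v : Fin (p+2) → ℚ) (k : Fin (p+2)) :
    ∑ j ∈ Finset.Iic k,
      (Fin.cases (v 0) (fun j' : Fin (p+1) => v j'.succ - v j'.castSucc) j : ℚ) = v k := by
  induction k using Fin.induction with
  | zero =>
    have h : Finset.Iic (0 : Fin (p+2)) = {0} := by
      ext j; simp [Fin.le_zero_iff]
    simp [h]
  | succ i ih =>
    have hins : Finset.Iic (i.succ) = insert i.succ (Finset.Iic i.castSucc) := by
      ext j
      simp only [Finset.mem_Iic, Finset.mem_insert, Fin.le_def, Fin.ext_iff,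
        Fin.coe_castSucc, Fin.val_succ]
      omega
    rw [hins, Finset.sum_insert (by
      simp only [Finset.mem_Iic]
      exact not_le.2 (Fin.castSucc_lt_succ (i := i)))]
    rw [ih, Fin.cases_succ]
    ring

lemma zero_case {p : ℕ}
    (IH : ∀ a b : Fin (p+1) → ℕ, StrictMono a → StrictMono b → (∀ i, a i ≤ b i) →
      0 < (Matrix.of fun i j : Fin (p+1) => ((b j).choose (a i) : ℚ)).det)
    (a b : Fin (p+2) → ℕ) (h0 : a 0 = 0) (ha : StrictMono a) (hb : StrictMono b)
    (hab : ∀ i, a i ≤ b i) :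
    0 < (Matrix.of fun i j : Fin (p+2) => ((b j).choose (a i) : ℚ)).det := by
  classical
  set M : Matrix (Fin (p+2)) (Fin (p+2)) ℚ :=
    Matrix.of (fun i j : Fin (p+2) => ((b j).choose (a i) : ℚ)) with hMdef
  set N : Matrix (Fin (p+2)) (Fin (p+2)) ℚ :=
    Matrix.of (fun i j : Fin (p+2) =>
      Fin.cases (M i 0) (fun j' : Fin (p+1) => M i j'.succ - M i j'.castSucc) j) with hNdef
  set U : Matrix (Fin (p+2)) (Fin (p+2)) ℚ :=
    Matrix.of (fun j k : Fin (p+2) => if j ≤ k then (1:ℚ) else 0) with hUdef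
  have hNU : N * U = M := by
    ext i k
    rw [Matrix.mul_apply]
    have step1 : ∀ j : Fin (p+2), N i j * U j k = if j ≤ k then N i j else 0 := by
      intro j
      by_cases h : j ≤ k <;> simp [hUdef, h]
    simp only [step1]
    rw [← Finset.sum_filter]
    have hfil : Finset.univ.filter (fun j : Fin (p+2) => j ≤ k) = Finset.Iic k := by
      ext j; simp
    rw [hfil]
    exact tele (fun j => M i j) k
  have hU : U.det = 1 := by
    have hupper : U.BlockTriangular id := by
      intro i j hij
      simp only [hUdef, Matrix.of_apply]
      exact if_neg (not_le.2 hij)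
    rw [Matrix.det_of_upperTriangular hupper]
    simp [hUdef]
  have hMN : M.det = N.det := by
    rw [← hNU, Matrix.det_mul, hU, mul_one]
  -- row zero of N
  have hN00 : N 0 0 = 1 := by
    simp [hNdef, hMdef, h0]
  have hN0succ : ∀ j : Fin (p+1), N 0 j.succ = 0 := by
    intro j
    simp [hNdef, hMdef, h0]
  -- expand along first row
  have hexp : N.det = (N.submatrix Fin.succ Fin.succ).det := by
    rw [Matrix.det_succ_row_zero]
    rw [Finset.sum_eq_single (0 : Fin (p+2))]
    · simp [hN00, Fin.succAbove_zero]
    · intro j _ hj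
      obtain ⟨j', rfl⟩ := Fin.exists_succ_eq.2 hj
      rw [hN0succ j']
      ring
    · intro h; exact absurd (Finset.mem_univ _) h
  -- a values at succ are positive
  have ha1 : ∀ i : Fin (p+1), 1 ≤ a i.succ := by
    intro i
    have : a 0 < a i.succ := ha (Fin.succ_pos i)
    omega
  -- the submatrix as a sum over columns
  have hN' : N.submatrix Fin.succ Fin.succ =
      (Matrix.of (fun j : Fin (p+1) => ∑ t ∈ Finset.Ico (b j.castSucc) (b j.succ),
        fun i : Fin (p+1) => ((t.choose (a i.succ - 1) : ℕ) : ℚ)))ᵀ := by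
    ext i j
    simp only [Matrix.submatrix_apply, Matrix.transpose_apply, Matrix.of_apply,
      Finset.sum_apply]
    rw [hNdef]
    simp only [Matrix.of_apply, Fin.cases_succ]
    have hs : a i.succ - 1 + 1 = a i.succ := by have := ha1 i; omega
    have := hockey_s8 (a i.succ - 1) (b j.castSucc) (b j.succ)
      (le_of_lt (hb (Fin.castSucc_lt_succ (i := j))))
    rw [hs] at this
    rw [hMdef]
    simpa using this
  rw [hMN, hexp, hN', Matrix.det_transpose]
  -- multilinear expansion
  have hml := (Matrix.detRowAlternating :
      (Fin (p+1) → ℚ) [⋀^Fin (p+1)]→ₗ[ℚ] ℚ).toMultilinearMap.map_sum_finset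
    (fun j t => fun i : Fin (p+1) => ((t.choose (a i.succ - 1) : ℕ) : ℚ))
    (fun j : Fin (p+1) => Finset.Ico (b j.castSucc) (b j.succ))
  have hdet_eq : (Matrix.of (fun j : Fin (p+1) => ∑ t ∈ Finset.Ico (b j.castSucc) (b j.succ),
        fun i : Fin (p+1) => ((t.choose (a i.succ - 1) : ℕ) : ℚ))).det =
      ∑ r ∈ Fintype.piFinset (fun j : Fin (p+1) => Finset.Ico (b j.castSucc) (b j.succ)),
        (Matrix.of (fun j i : Fin (p+1) => (((r j).choose (a i.succ - 1) : ℕ) : ℚ))).det := by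
    exact hml
  rw [hdet_eq]
  -- positivity of the sum
  have hterm : ∀ r ∈ Fintype.piFinset (fun j : Fin (p+1) => Finset.Ico (b j.castSucc) (b j.succ)),
      0 ≤ (Matrix.of (fun j i : Fin (p+1) => (((r j).choose (a i.succ - 1) : ℕ) : ℚ))).det := by
    intro r hr
    simp only [Fintype.mem_piFinset, Finset.mem_Ico] at hr
    have htr : (Matrix.of (fun j i : Fin (p+1) => (((r j).choose (a i.succ - 1) : ℕ) : ℚ))) =
        (Matrix.of (fun i l : Fin (p+1) => (((r l).choose (a i.succ - 1) : ℕ) : ℚ)))ᵀ := by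
      ext x y; simp
    rw [htr, Matrix.det_transpose]
    have hrmono : StrictMono r := by
      intro j j' hjj'
      calc r j < b j.succ := (hr j).2
        _ ≤ b j'.castSucc := hb.monotone (by
            simp only [Fin.le_def, Fin.val_succ, Fin.coe_castSucc]; omega)
        _ ≤ r j' := (hr j').1
    by_cases hgood : ∀ i : Fin (p+1), a i.succ - 1 ≤ r i
    · apply le_of_lt
      apply IH (fun i => a i.succ - 1) r
      · intro i i' hii'
        have h1 := ha (Fin.succ_lt_succ_iff.2 hii')
        have := ha1 i
        show a i.succ - 1 < a i'.succ - 1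
        omega
      · exact hrmono
      · exact hgood
    · push_neg at hgood
      obtain ⟨j, hj⟩ := hgood
      rw [det_choose_zero (fun i => a i.succ - 1) r
        (fun i i' h => by
          have := ha.monotone (Fin.succ_le_succ_iff.2 h)
          show a i.succ - 1 ≤ a i'.succ - 1
          omega)
        hrmono.monotone j hj]
  apply Finset.sum_pos'
  · exact hterm
  · refine ⟨fun j => b j.succ - 1, ?_, ?_⟩
    · simp only [Fintype.mem_piFinset, Finset.mem_Ico]
      intro j
      have := hb (Fin.castSucc_lt_succ (i := j))
      omega
    · have htr : (Matrix.of (fun j i : Fin (p+1) =>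
          ((((b j.succ - 1)).choose (a i.succ - 1) : ℕ) : ℚ))) =
          (Matrix.of (fun i l : Fin (p+1) =>
            ((((b l.succ - 1)).choose (a i.succ - 1) : ℕ) : ℚ)))ᵀ := by
        ext x y; simp
      rw [htr, Matrix.det_transpose]
      apply IH (fun i => a i.succ - 1) (fun j => b j.succ - 1)
      · intro i i' hii'
        have h1 := ha (Fin.succ_lt_succ_iff.2 hii')
        have := ha1 i
        show a i.succ - 1 < a i'.succ - 1
        omega
      · intro j j' hjj'
        have h1 := hb (Fin.succ_lt_succ_iff.2 hjj')
        have h2 := hb (Fin.castSucc_lt_succ (i := j))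
        show b j.succ - 1 < b j'.succ - 1
        omega
      · intro i
        have := hab i.succ
        have h2 := hb (Fin.castSucc_lt_succ (i := i))
        show a i.succ - 1 ≤ b i.succ - 1
        omega

lemma det_choose_pos : ∀ (p : ℕ) (a b : Fin (p+1) → ℕ), StrictMono a → StrictMono b →
    (∀ i, a i ≤ b i) →
    0 < (Matrix.of fun i j : Fin (p+1) => ((b j).choose (a i) : ℚ)).det := by
  intro p
  induction p with
  | zero =>
    intro a b _ _ hab
    rw [show (Matrix.of fun i j : Fin 1 => ((b j).choose (a i) : ℚ)).det
        = ((b 0).choose (a 0) : ℚ) from Matrix.det_fin_one _]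
    exact_mod_cast Nat.choose_pos (hab 0)
  | succ p IH =>
    suffices H : ∀ (k : ℕ) (a b : Fin (p+2) → ℕ), a 0 = k → StrictMono a → StrictMono b →
        (∀ i, a i ≤ b i) →
        0 < (Matrix.of fun i j : Fin (p+2) => ((b j).choose (a i) : ℚ)).det by
      intro a b ha hb hab; exact H (a 0) a b rfl ha hb hab
    intro k
    induction k with
    | succ k IHk =>
      intro a b h0 ha hb hab
      have ha1 : ∀ i, 1 ≤ a i := by
        intro i; have := ha.monotone (Fin.zero_le i); omega
      have hb1 : ∀ j, 1 ≤ b j := by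
        intro j
        have h1 := ha.monotone (Fin.zero_le j)
        have := hab j; omega
      have key : (Matrix.of fun i j : Fin (p+2) => ((b j).choose (a i) : ℚ)) =
          Matrix.of (fun i j : Fin (p+2) => (a i : ℚ)⁻¹ *
            ((Matrix.of fun i j : Fin (p+2) => (b j : ℚ) *
              (Matrix.of (fun i j : Fin (p+2) => (((b j - 1).choose (a i - 1) : ℕ) : ℚ))) i j)) i j) := by
        ext i j
        simp only [Matrix.of_apply]
        have h2 : (b j - 1) + 1 = b j := by have := hb1 j; omega
        have h3 : (a i - 1) + 1 = a i := by have := ha1 i; omega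
        have := Nat.add_one_mul_choose_eq (b j - 1) (a i - 1)
        rw [h2, h3] at this
        have hane : (a i : ℚ) ≠ 0 := by
          have := ha1 i; positivity
        field_simp
        exact_mod_cast this.symm
      rw [key, Matrix.det_mul_column, Matrix.det_mul_row]
      have hdet : 0 < (Matrix.of fun i j : Fin (p+2) => (((b j - 1).choose (a i - 1) : ℕ) : ℚ)).det := by
        apply IHk (fun i => a i - 1) (fun j => b j - 1) (by show a 0 - 1 = k; omega)
        · intro i i' hii'
          have := ha hii'; have := ha1 i; show a i - 1 < a i' - 1; omega
        · intro j j' hjj'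
          have := hb hjj'; have := hb1 j; show b j - 1 < b j' - 1; omega
        · intro i; have := hab i; have := ha1 i; show a i - 1 ≤ b i - 1; omega
      have h1 : (0:ℚ) < ∏ i : Fin (p+2), (a i : ℚ)⁻¹ := by
        apply Finset.prod_pos; intro i _
        have := ha1 i; positivity
      have h2 : (0:ℚ) < ∏ j : Fin (p+2), (b j : ℚ) := by
        apply Finset.prod_pos; intro j _
        have := hb1 j; positivity
      positivity
    | zero =>
      intro a b h0 ha hb hab
      exact zero_case IH a b h0 ha hb hab



/-- If `{r ∘ α, c ∘ β}` is a maximal ordered sub-pair of length `p + 1` for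
`{[r 0, …, r m], [c 0, …, c n]}`, then the rows of `T_{r,c}` indexed by
`α 0, …, α p` (i.e. the rows of `T_{r̂,c}`) span the row space of `T_{r,c}`. -/
theorem pascal_maximal_orderedSubPair_rows_span
    (m n p : ℕ) (r c α β : ℕ → ℕ) (hr : StrictMono r) (hc : StrictMono c)
    (hsub : OrderedSubPair r c m n p α β)
    (hmax : ∀ (q : ℕ) (α' β' : ℕ → ℕ), OrderedSubPair r c m n q α' β' → q ≤ p) :
    Submodule.span ℚ {x : Fin (n + 1) → ℚ | ∃ i ≤ p,
        x = fun j : Fin (n + 1) => ((c (j : ℕ)).choose (r (α i)) : ℚ)} =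
      Submodule.span ℚ (Set.range fun i : Fin (m + 1) => pascalSub r c m n i) := by
  classical
  obtain ⟨hαm, hβm, hαp, hβp, hrc⟩ := hsub
  set fam : Fin (m+1) → (Fin (n+1) → ℚ) := fun i => pascalSub r c m n i with hfam
  set w : Fin (p+1) → (Fin (n+1) → ℚ) :=
    fun i => fun j => ((c (j:ℕ)).choose (r (α (i:ℕ))) : ℚ) with hw
  have hip : ∀ i : Fin (p+1), (i:ℕ) ≤ p := fun i => Nat.lt_succ_iff.1 i.isLt
  have hsetw : {x : Fin (n + 1) → ℚ | ∃ i ≤ p,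
      x = fun j : Fin (n + 1) => ((c (j : ℕ)).choose (r (α i)) : ℚ)} = Set.range w := by
    ext x
    constructor
    · rintro ⟨i, hi, rfl⟩
      exact ⟨⟨i, Nat.lt_succ_of_le hi⟩, rfl⟩
    · rintro ⟨i, rfl⟩
      exact ⟨(i:ℕ), hip i, rfl⟩
  rw [hsetw]
  have hαle : ∀ i : Fin (p+1), α (i:ℕ) ≤ m := by
    intro i
    rcases eq_or_lt_of_le (hip i) with h | h
    · rw [h]; exact hαp
    · exact le_trans (le_of_lt (hαm (Set.mem_Iic.2 (hip i)) (Set.mem_Iic.2 le_rfl) h)) hαp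
  have hβle : ∀ i : Fin (p+1), β (i:ℕ) ≤ n := by
    intro i
    rcases eq_or_lt_of_le (hip i) with h | h
    · rw [h]; exact hβp
    · exact le_trans (le_of_lt (hβm (Set.mem_Iic.2 (hip i)) (Set.mem_Iic.2 le_rfl) h)) hβp
  -- linear independence of w via the nonsingular column-selected submatrix
  set Mβ : Matrix (Fin (p+1)) (Fin (p+1)) ℚ :=
    Matrix.of fun i j : Fin (p+1) => ((c (β (j:ℕ))).choose (r (α (i:ℕ))) : ℚ) with hMβ
  have hdet : 0 < Mβ.det := by
    apply det_choose_pos p (fun i : Fin (p+1) => r (α (i:ℕ))) (fun j : Fin (p+1) => c (β (j:ℕ)))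
    · intro i i' h
      exact hr (hαm (Set.mem_Iic.2 (hip i)) (Set.mem_Iic.2 (hip i')) h)
    · intro j j' h
      exact hc (hβm (Set.mem_Iic.2 (hip j)) (Set.mem_Iic.2 (hip j')) h)
    · exact fun i => hrc (i:ℕ) (hip i)
  have hunit : IsUnit Mβ := (Matrix.isUnit_iff_isUnit_det _).2 (isUnit_iff_ne_zero.2 hdet.ne')
  have hwind : LinearIndependent ℚ w := by
    rw [Fintype.linearIndependent_iff]
    intro g hg i
    have hvm : Matrix.vecMul g Mβ = Matrix.vecMul 0 Mβ := by
      rw [Matrix.zero_vecMul]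
      ext j
      have := congrFun hg ⟨β (j:ℕ), Nat.lt_succ_of_le (hβle j)⟩
      simpa [Matrix.vecMul, dotProduct, hw, hMβ, Finset.sum_apply] using this
    have := Matrix.vecMul_injective_iff_isUnit.2 hunit hvm
    exact congrFun this i
  have hfW : finrank ℚ (Submodule.span ℚ (Set.range w)) = p + 1 := by
    rw [finrank_span_eq_card hwind, Fintype.card_fin]
  -- W ≤ V
  have hWV : Submodule.span ℚ (Set.range w) ≤ Submodule.span ℚ (Set.range fam) := by
    rw [Submodule.span_le]
    rintro x ⟨i, rfl⟩
    apply Submodule.subset_span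
    exact ⟨⟨α (i:ℕ), Nat.lt_succ_of_le (hαle i)⟩, rfl⟩
  -- rank bound: finrank V ≤ p + 1
  have hVle : finrank ℚ (Submodule.span ℚ (Set.range fam)) ≤ p + 1 := by
    set d := finrank ℚ (Submodule.span ℚ (Set.range fam)) with hd
    rcases Nat.eq_zero_or_pos d with h0 | h1
    · omega
    obtain ⟨bset, hbsub, hbspan, hbind⟩ := exists_linearIndependent ℚ (Set.range fam)
    have hbfin : bset.Finite := Set.Finite.subset (Set.finite_range fam) hbsub
    haveI : Fintype bset := hbfin.fintype
    have hdcard : d = bset.toFinset.card := by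
      rw [hd, ← hbspan, finrank_span_set_eq_card hbind]
    have hpick : ∀ x : bset, ∃ i : Fin (m+1), fam i = (x : Fin (n+1) → ℚ) := fun x => hbsub x.2
    choose ix hix using hpick
    have hixinj : Function.Injective ix := by
      intro x y hxy
      have : (x : Fin (n+1) → ℚ) = (y : Fin (n+1) → ℚ) := by rw [← hix x, ← hix y, hxy]
      exact Subtype.ext this
    set I : Finset (Fin (m+1)) := Finset.univ.image ix with hI
    have hIcard : I.card = d := by
      rw [hI, Finset.card_image_of_injective _ hixinj, hdcard]
      simp [Set.toFinset_card]
    set e := I.orderIsoOfFin hIcard with he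
    set idx : Fin d → Fin (m+1) := fun k => (e k : Fin (m+1)) with hidx
    have hidxmono : StrictMono idx := by
      intro k k' hkk'
      exact e.strictMono hkk'
    have hψ : ∀ k : Fin d, ∃ x : bset, ix x = idx k := by
      intro k
      have : idx k ∈ I := (e k).2
      rw [hI] at this
      simpa using (Finset.mem_image.1 this)
    choose ψ hψeq using hψ
    have hfamidx : ∀ k, fam (idx k) = (ψ k : Fin (n+1) → ℚ) := by
      intro k; rw [← hψeq k, hix]
    have hψinj : Function.Injective ψ := by
      intro k k' h
      apply hidxmono.injective
      rw [← hψeq k, ← hψeq k', h]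
    have hind2 : LinearIndependent ℚ (fun k : Fin d => fam (idx k)) := by
      have h2 := hbind.comp ψ hψinj
      have : (fun k : Fin d => fam (idx k)) = (fun x : bset => (x : Fin (n+1) → ℚ)) ∘ ψ := by
        funext k; simp [hfamidx k, Function.comp]
      rw [this]; exact h2
    have hdn : d ≤ n + 1 := by
      have h2 := Submodule.finrank_le (Submodule.span ℚ (Set.range fam))
      rw [← hd] at h2
      simpa [Module.finrank_fintype_fun_eq_card] using h2
    have hcol : ∀ k : Fin d, r (idx k) ≤ c (n + 1 - d + (k:ℕ)) := by
      intro k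
      by_contra hlt
      push_neg at hlt
      have hkd : (k:ℕ) < d := k.isLt
      have hjn : n + 1 - d + (k:ℕ) < n + 1 := by omega
      set jstar : Fin (n+1) := ⟨n + 1 - d + (k:ℕ), hjn⟩ with hjstar
      have hsubind : LinearIndependent ℚ (fun k' : {k' : Fin d // k ≤ k'} => fam (idx k')) :=
        hind2.comp _ Subtype.val_injective
      have hcard := card_le_of_supported (Finset.Ioi jstar)
        (fun k' : {k' : Fin d // k ≤ k'} => fam (idx k')) hsubind ?_
      · rw [Fin.card_Ioi] at hcard
        have hcsub : Fintype.card {k' : Fin d // k ≤ k'} = (Finset.Ici k).card := by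
          rw [Fintype.card_subtype]; congr 1; ext k'; simp
        rw [hcsub, Fin.card_Ici] at hcard
        simp only [hjstar] at hcard
        omega
      · intro k' j hj
        simp only [Finset.mem_Ioi, not_lt] at hj
        have hcj : c (j:ℕ) ≤ c jstar := hc.monotone (by exact_mod_cast hj)
        have hr2 : r (idx k) ≤ r (idx k'.1) := hr.monotone (by
          have : idx k ≤ idx k'.1 := hidxmono.monotone k'.2
          exact_mod_cast this)
        have : c (j:ℕ) < r (idx k'.1) := lt_of_le_of_lt hcj (lt_of_lt_of_le hlt hr2)
        simp [hfam, pascalSub, Nat.choose_eq_zero_of_lt this]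
    have hOSP : OrderedSubPair r c m n (d-1)
        (fun k => if h : k < d then (idx ⟨k, h⟩ : ℕ) else m + 1 + k)
        (fun k => n + 1 - d + k) := by
      refine ⟨?_, ?_, ?_, ?_, ?_⟩
      · intro x hx y hy hxy
        have hxd : x < d := by simp only [Set.mem_Iic] at hx; omega
        have hyd : y < d := by simp only [Set.mem_Iic] at hy; omega
        simp only [dif_pos hxd, dif_pos hyd]
        exact_mod_cast hidxmono (show (⟨x, hxd⟩ : Fin d) < ⟨y, hyd⟩ from hxy)
      · intro x _ y _ hxy
        show n + 1 - d + x < n + 1 - d + y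
        omega
      · have h : d - 1 < d := by omega
        show (if h : d - 1 < d then ((idx ⟨d-1, h⟩ : Fin (m+1)) : ℕ) else m + 1 + (d-1)) ≤ m
        rw [dif_pos h]
        exact Nat.lt_succ_iff.1 (idx ⟨d-1, h⟩).isLt
      · show n + 1 - d + (d - 1) ≤ n
        omega
      · intro k hk
        have hkd : k < d := by omega
        show r (if h : k < d then ((idx ⟨k, h⟩ : Fin (m+1)) : ℕ) else m + 1 + k) ≤ c (n + 1 - d + k)
        rw [dif_pos hkd]
        exact hcol ⟨k, hkd⟩
    have := hmax (d-1) _ _ hOSP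
    omega
  have := Submodule.eq_of_le_of_finrank_le hWV (by rw [hfW]; exact hVle)
  exact this
end
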